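/- arXiv:1210.7469 — 4 statements merged into one kernel-verified Lean document; each statement's English description precedes it below -/
import Mathlib

section
/- Let Φ be a finite NCIFS. Then the Hausdorff dimension of the limit set J(Φ) is bounded above by the Bowen dimension B(Φ) = sup{t ≥ 0 : P̲(t) > 0}, where P̲ is the lower pressure function. -/
open Metric Set Filter Topology MeasureTheory
open scoped ENNReal

noncomputable section

/-- A non-autonomous conformal iterated function system (NCIFS) on a compact subset `X` of
`ℝ^d`, encoded via the composed maps `wMap m n ω` associated with finite words `ω` occupying
levels `m, m+1, …, n-1`, together with their conformal derivative norms `segN m n ω = ‖Dφ_ω‖`.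
The fields record the standing assumptions: the open set condition, bounded distortion with
constant `K` (both for derivative norms of split words and as two-sided Lipschitz bounds),
and uniform contraction with constant `η < 1`. -/
structure NCIFS (d : ℕ) where
  X : Set (EuclideanSpace ℝ (Fin d))
  hX_compact : IsCompact X
  hX_nonempty : X.Nonempty
  hX_regular : closure (interior X) = X
  hX_convex : Convex ℝ X
  I : ℕ → Type
  hI_ne : ∀ n, Nonempty (I n)
  K : ℝ
  hK : 1 ≤ K
  η : ℝ
  hη_pos : 0 < η
  hη_lt : η < 1
  /-- `segN m n ω` is the derivative norm `‖Dφ_ω‖` of the word `ω` on levels `m, …, n-1`. -/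
  segN : (m n : ℕ) → ((j : Finset.Ico m n) → I j) → ℝ
  segN_pos : ∀ m n ω, 0 < segN m n ω
  /-- uniform contraction -/
  segN_contract : ∀ m n ω, segN m n ω ≤ η ^ (n - m)
  /-- submultiplicativity and bounded distortion for derivative norms of split words -/
  segN_split : ∀ m k n, m ≤ k → k ≤ n →
      ∀ (ω : (j : Finset.Ico m n) → I j) (ω₁ : (j : Finset.Ico m k) → I j)
        (ω₂ : (j : Finset.Ico k n) → I j),
        (∀ (j : ℕ) (h₁ : j ∈ Finset.Ico m k) (h₂ : j ∈ Finset.Ico m n),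
            ω₁ ⟨j, h₁⟩ = ω ⟨j, h₂⟩) →
        (∀ (j : ℕ) (h₁ : j ∈ Finset.Ico k n) (h₂ : j ∈ Finset.Ico m n),
            ω₂ ⟨j, h₁⟩ = ω ⟨j, h₂⟩) →
        segN m n ω ≤ segN m k ω₁ * segN k n ω₂ ∧
          segN m k ω₁ * segN k n ω₂ ≤ K * segN m n ω
  /-- the conformal contraction associated to the word `ω` on levels `m, …, n-1` -/
  wMap : (m n : ℕ) → ((j : Finset.Ico m n) → I j) →
      EuclideanSpace ℝ (Fin d) → EuclideanSpace ℝ (Fin d)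
  wMap_id : ∀ m (ω : (j : Finset.Ico m m) → I j) x, wMap m m ω x = x
  wMap_mapsTo : ∀ m n ω, MapsTo (wMap m n ω) X X
  /-- upper conformal bound: `φ_ω` is `‖Dφ_ω‖`-Lipschitz on `X` -/
  wMap_lip : ∀ m n ω, ∀ x ∈ X, ∀ y ∈ X,
      dist (wMap m n ω x) (wMap m n ω y) ≤ segN m n ω * dist x y
  /-- lower conformal bound (bounded distortion) -/
  wMap_colip : ∀ m n ω, ∀ x ∈ X, ∀ y ∈ X,
      segN m n ω / K * dist x y ≤ dist (wMap m n ω x) (wMap m n ω y)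
  /-- compatibility of the maps under splitting of words -/
  wMap_comp : ∀ m k n, m ≤ k → k ≤ n →
      ∀ (ω : (j : Finset.Ico m n) → I j) (ω₁ : (j : Finset.Ico m k) → I j)
        (ω₂ : (j : Finset.Ico k n) → I j),
        (∀ (j : ℕ) (h₁ : j ∈ Finset.Ico m k) (h₂ : j ∈ Finset.Ico m n),
            ω₁ ⟨j, h₁⟩ = ω ⟨j, h₂⟩) →
        (∀ (j : ℕ) (h₁ : j ∈ Finset.Ico k n) (h₂ : j ∈ Finset.Ico m n),
            ω₂ ⟨j, h₁⟩ = ω ⟨j, h₂⟩) →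
        ∀ x ∈ X, wMap m n ω x = wMap m k ω₁ (wMap k n ω₂ x)
  /-- the open set condition -/
  osc : ∀ n (a b : (j : Finset.Ico n (n+1)) → I j), a ≠ b →
      Disjoint (wMap n (n+1) a '' interior X) (wMap n (n+1) b '' interior X)

namespace NCIFS

variable {d : ℕ} (Φ : NCIFS d)

/-- Words occupying levels `m, …, n-1`. -/
abbrev Word (m n : ℕ) := (j : Finset.Ico m n) → Φ.I j

instance (m n : ℕ) : Nonempty (Φ.Word m n) :=
  ⟨fun j => Classical.choice (Φ.hI_ne j)⟩

/-- The one-letter word at level `n` given by the index `i`. -/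
def single (n : ℕ) (i : Φ.I n) : Φ.Word n (n+1) :=
  fun j => cast (congrArg Φ.I (show n = (j : ℕ) by
    have := Finset.mem_Ico.mp j.2; omega)) i

/-- `‖Dφ_i^{(n)}‖`, the derivative norm of the single map with index `i` at level `n`. -/
def Dnorm (n : ℕ) (i : Φ.I n) : ℝ := Φ.segN n (n+1) (Φ.single n i)

/-- The partition function `Z_n(t) = Σ_{ω ∈ I^n} ‖Dφ_ω‖^t`, valued in `[0,∞]`. -/
def Z (n : ℕ) (t : ℝ) : ℝ≥0∞ := ∑' ω : Φ.Word 0 n, ENNReal.ofReal (Φ.segN 0 n ω ^ t)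

/-- The lower pressure `P̲(t) = liminf (1/n) log Z_n(t)`, valued in `[-∞,∞]`. -/
def lowP (t : ℝ) : EReal :=
  liminf (fun n : ℕ => (Φ.Z n t).log * (((n : ℝ)⁻¹ : ℝ) : EReal)) atTop

/-- The upper pressure `P̄(t) = limsup (1/n) log Z_n(t)`. -/
def upP (t : ℝ) : EReal :=
  limsup (fun n : ℕ => (Φ.Z n t).log * (((n : ℝ)⁻¹ : ℝ) : EReal)) atTop

/-- The Bowen dimension `B(Φ) = sup {t ≥ 0 : P̲(t) > 0}` (and `0` if there is no such `t`). -/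
def Bdim : ℝ≥0∞ := ⨆ t : {t : ℝ // 0 ≤ t ∧ (0 : EReal) < Φ.lowP t}, ENNReal.ofReal t.1

/-- The limit set `J(Φ) = ⋂_n ⋃_{ω ∈ I^n} φ_ω(X)`. -/
def limitSet : Set (EuclideanSpace ℝ (Fin d)) :=
  ⋂ n, ⋃ ω : Φ.Word 0 n, Φ.wMap 0 n ω '' Φ.X

/-- The minimal derivative norm `c̲_n` at level `n`. -/
def cmin (n : ℕ) : ℝ := ⨅ i : Φ.I n, Φ.Dnorm n i

/-- The maximal derivative norm `c̄_n` at level `n`. -/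
def cmax (n : ℕ) : ℝ := ⨆ i : Φ.I n, Φ.Dnorm n i

/-- `ρ_n`, the maximal ratio of derivative norms at level `n`. -/
def ρ (n : ℕ) : ℝ := Φ.cmax n / Φ.cmin n

/-- The modified partition function
`Z̃_n(t) = Z_{n-1}(t) · (#I^{(n)})^{t/d} · c̲_n^t`. -/
def Zt (n : ℕ) (t : ℝ) : ℝ≥0∞ :=
  Φ.Z (n - 1) t * ENNReal.ofReal ((Nat.card (Φ.I n) : ℝ) ^ (t / (d : ℝ)) * Φ.cmin n ^ t)

/-- `P̃(t) = liminf (1/n) log Z̃_n(t)`. -/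
def tP (t : ℝ) : EReal :=
  liminf (fun n : ℕ => (Φ.Zt n t).log * (((n : ℝ)⁻¹ : ℝ) : EReal)) atTop

end NCIFS

/-- Key estimate: if `0 < s < t` and the lower pressure at `s` is nonpositive, then the
`t`-dimensional Hausdorff measure of the limit set vanishes. -/
theorem NCIFS.hausdorffMeasure_limitSet_eq_zero {d : ℕ} (Φ : NCIFS d) [∀ n, Finite (Φ.I n)]
    {s t : ℝ} (hs0 : 0 < s) (hst : s < t) (hP : Φ.lowP s ≤ 0) :
    μH[t] Φ.limitSet = 0 := by
  haveI : ∀ n, Fintype (Φ.Word 0 n) := fun n => Fintype.ofFinite _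
  have ht0 : 0 < t := hs0.trans hst
  set D := Metric.diam Φ.X with hD
  have hD0 : 0 ≤ D := Metric.diam_nonneg
  have hη0 := Φ.hη_pos
  have hη1 := Φ.hη_lt
  -- diameter estimate for the pieces
  have hdiam : ∀ n (ω : Φ.Word 0 n),
      EMetric.diam (Φ.wMap 0 n ω '' Φ.X) ≤ ENNReal.ofReal (Φ.segN 0 n ω * D) := by
    intro n ω
    refine EMetric.diam_le ?_
    rintro x ⟨a, ha, rfl⟩ y ⟨b, hb, rfl⟩
    rw [edist_dist]
    refine ENNReal.ofReal_le_ofReal ?_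
    calc dist (Φ.wMap 0 n ω a) (Φ.wMap 0 n ω b) ≤ Φ.segN 0 n ω * dist a b :=
          Φ.wMap_lip 0 n ω a ha b hb
      _ ≤ Φ.segN 0 n ω * D :=
          mul_le_mul_of_nonneg_left
            (Metric.dist_le_diam_of_mem Φ.hX_compact.isBounded ha hb)
            (Φ.segN_pos 0 n ω).le
  -- covering bound for the Hausdorff measure
  have hcover : μH[t] Φ.limitSet ≤
      liminf (fun n : ℕ =>
        ∑ ω : Φ.Word 0 n, EMetric.diam (Φ.wMap 0 n ω '' Φ.X) ^ t) atTop := by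
    refine MeasureTheory.Measure.hausdorffMeasure_le_liminf_sum t Φ.limitSet
      (fun n : ℕ => ENNReal.ofReal (Φ.η ^ n * D)) ?_
      (fun n ω => Φ.wMap 0 n ω '' Φ.X) ?_ ?_
    · have h1 : Tendsto (fun n : ℕ => Φ.η ^ n * D) atTop (𝓝 (0 * D)) :=
        (tendsto_pow_atTop_nhds_zero_of_lt_one hη0.le hη1).mul_const D
      rw [zero_mul] at h1
      have := ENNReal.tendsto_ofReal h1
      simpa using this
    · filter_upwards with n
      intro ω
      refine le_trans (hdiam n ω) (ENNReal.ofReal_le_ofReal ?_)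
      have := Φ.segN_contract 0 n ω
      simp only [Nat.sub_zero] at this
      exact mul_le_mul_of_nonneg_right this hD0
    · filter_upwards with n
      exact Set.iInter_subset _ n
  refine le_antisymm (le_trans hcover ?_) zero_le
  -- constants
  set c : ℝ := Φ.η ^ (t - s) with hc
  have hc0 : 0 < c := Real.rpow_pos_of_pos hη0 _
  have hc1 : c < 1 := Real.rpow_lt_one hη0.le hη1 (by linarith)
  set ε' : ℝ := -Real.log c / 2 with hε'def
  have hlogc : Real.log c < 0 := Real.log_neg hc0 hc1
  have hε' : 0 < ε' := by simp only [hε'def]; linarith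
  set q : ℝ := c * Real.exp ε' with hq
  have hq0 : 0 < q := mul_pos hc0 (Real.exp_pos _)
  have hq1 : q < 1 := by
    have : q = Real.exp (Real.log c + ε') := by
      rw [Real.exp_add, Real.exp_log hc0]
    rw [this]
    apply Real.exp_lt_one_iff.mpr
    simp only [hε'def]; linarith
  refine ENNReal.le_of_forall_pos_le_add fun ε hε _ => ?_
  rw [zero_add]
  -- frequently the partition function is small
  have hfreq : ∃ᶠ n in atTop,
      (Φ.Z n s).log * (((n : ℝ)⁻¹ : ℝ) : EReal) < (ε' : EReal) := by
    exact Filter.frequently_lt_of_liminf_lt (by isBoundedDefault)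
      (lt_of_le_of_lt hP (EReal.coe_pos.mpr hε'))
  -- eventually the geometric bound is small
  have hev : ∀ᶠ n : ℕ in atTop, ENNReal.ofReal (D ^ t * q ^ n) ≤ (ε : ℝ≥0∞) := by
    have h1 : Tendsto (fun n : ℕ => D ^ t * q ^ n) atTop (𝓝 (D ^ t * 0)) :=
      (tendsto_pow_atTop_nhds_zero_of_lt_one hq0.le hq1).const_mul _
    rw [mul_zero] at h1
    have h2 := ENNReal.tendsto_ofReal h1
    rw [ENNReal.ofReal_zero] at h2
    exact h2.eventually_le_const (by exact_mod_cast hε)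
  refine Filter.liminf_le_of_frequently_le ?_
  have hkey := hfreq.and_eventually (hev.and (Filter.eventually_ge_atTop 1))
  refine hkey.mono ?_
  rintro n ⟨han, hevn, hn1⟩
  -- bound the sum at level n
  have hZfin : Φ.Z n s < ⊤ := by
    rw [Z, tsum_fintype]
    exact ENNReal.sum_lt_top.mpr fun ω _ => ENNReal.ofReal_lt_top
  have hZpos : 0 < Φ.Z n s := by
    obtain ⟨ω₀⟩ : Nonempty (Φ.Word 0 n) := inferInstance
    refine lt_of_lt_of_le ?_ (ENNReal.le_tsum ω₀)
    exact ENNReal.ofReal_pos.mpr (Real.rpow_pos_of_pos (Φ.segN_pos 0 n ω₀) _)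
  -- extract a real logarithm
  set L : EReal := (Φ.Z n s).log with hL
  have hLbot : L ≠ ⊥ := fun h => hZpos.ne' (ENNReal.log_eq_bot_iff.mp h)
  have hLtop : L ≠ ⊤ := fun h => hZfin.ne (ENNReal.log_eq_top_iff.mp h)
  lift L to ℝ using ⟨hLtop, hLbot⟩ with Lr hLr
  have hnR : (0 : ℝ) < (n : ℝ) := by exact_mod_cast hn1
  have hLr' : Lr * ((n : ℝ))⁻¹ < ε' := by
    have : ((Lr * ((n : ℝ))⁻¹ : ℝ) : EReal) < (ε' : EReal) := by
      rw [EReal.coe_mul]; exact han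
    exact_mod_cast this
  have hLrlt : Lr < (n : ℝ) * ε' := by
    rw [← div_eq_mul_inv] at hLr'
    have := (div_lt_iff₀ hnR).mp hLr'
    linarith
  have hZle : Φ.Z n s ≤ ENNReal.ofReal (Real.exp ((n : ℝ) * ε')) := by
    have h5 : Φ.Z n s = EReal.exp ((Lr : EReal)) := by
      rw [hLr]
      exact (ENNReal.exp_log _).symm
    rw [h5, EReal.exp_coe]
    exact ENNReal.ofReal_le_ofReal (Real.exp_le_exp.mpr hLrlt.le)
  -- per-term bound
  have hterm : ∀ ω : Φ.Word 0 n,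
      EMetric.diam (Φ.wMap 0 n ω '' Φ.X) ^ t ≤
        ENNReal.ofReal (Φ.segN 0 n ω ^ s) * ENNReal.ofReal (c ^ n * D ^ t) := by
    intro ω
    have hsegpos := Φ.segN_pos 0 n ω
    have h1 : EMetric.diam (Φ.wMap 0 n ω '' Φ.X) ^ t ≤
        ENNReal.ofReal ((Φ.segN 0 n ω * D) ^ t) := by
      rw [← ENNReal.ofReal_rpow_of_nonneg (mul_nonneg hsegpos.le hD0) ht0.le]
      exact ENNReal.rpow_le_rpow (hdiam n ω) ht0.le
    refine le_trans h1 ?_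
    rw [← ENNReal.ofReal_mul (Real.rpow_pos_of_pos hsegpos _).le]
    refine ENNReal.ofReal_le_ofReal ?_
    rw [Real.mul_rpow hsegpos.le hD0]
    have h2 : Φ.segN 0 n ω ^ t = Φ.segN 0 n ω ^ s * Φ.segN 0 n ω ^ (t - s) := by
      rw [← Real.rpow_add hsegpos]; ring_nf
    have h3 : Φ.segN 0 n ω ^ (t - s) ≤ (Φ.η ^ n) ^ (t - s) := by
      apply Real.rpow_le_rpow hsegpos.le ?_ (by linarith)
      have := Φ.segN_contract 0 n ω
      simpa using this
    have h4 : (Φ.η ^ n) ^ (t - s) = c ^ n := by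
      show (Φ.η ^ n) ^ (t - s) = (Φ.η ^ (t - s)) ^ n
      rw [← Real.rpow_natCast Φ.η n, ← Real.rpow_mul hη0.le, mul_comm,
        Real.rpow_mul hη0.le, Real.rpow_natCast]
    calc Φ.segN 0 n ω ^ t * D ^ t
        = Φ.segN 0 n ω ^ s * Φ.segN 0 n ω ^ (t - s) * D ^ t := by rw [← h2]
      _ ≤ Φ.segN 0 n ω ^ s * (Φ.η ^ n) ^ (t - s) * D ^ t := by
          have hDt : 0 ≤ D ^ t := Real.rpow_nonneg hD0 _
          have := mul_le_mul_of_nonneg_left h3 (Real.rpow_pos_of_pos hsegpos s).le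
          nlinarith [Real.rpow_pos_of_pos hsegpos s]
      _ = Φ.segN 0 n ω ^ s * (c ^ n * D ^ t) := by rw [h4]; ring
  -- sum the bounds
  calc (∑ ω : Φ.Word 0 n, EMetric.diam (Φ.wMap 0 n ω '' Φ.X) ^ t)
      ≤ ∑ ω : Φ.Word 0 n,
          ENNReal.ofReal (Φ.segN 0 n ω ^ s) * ENNReal.ofReal (c ^ n * D ^ t) :=
        Finset.sum_le_sum fun ω _ => hterm ω
    _ = Φ.Z n s * ENNReal.ofReal (c ^ n * D ^ t) := by
        rw [Z, tsum_fintype, Finset.sum_mul]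
    _ ≤ ENNReal.ofReal (Real.exp ((n : ℝ) * ε')) * ENNReal.ofReal (c ^ n * D ^ t) :=
        mul_le_mul_left hZle _
    _ = ENNReal.ofReal (D ^ t * q ^ n) := by
        rw [← ENNReal.ofReal_mul (Real.exp_nonneg _)]
        congr 1
        show Real.exp ((n : ℝ) * ε') * (c ^ n * D ^ t) = D ^ t * (c * Real.exp ε') ^ n
        rw [Real.exp_nat_mul, mul_pow]
        ring
    _ ≤ (ε : ℝ≥0∞) := hevn

/-- For a finite NCIFS, the Hausdorff dimension of the limit set is
bounded above by the Bowen dimension `B(Φ) = sup {t ≥ 0 : P̲(t) > 0}`. -/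
theorem NCIFS.dimH_le_Bdim {d : ℕ} (Φ : NCIFS d) [∀ n, Finite (Φ.I n)] :
    dimH Φ.limitSet ≤ Φ.Bdim := by
  by_contra h
  push_neg at h
  obtain ⟨r, hr1, hr2⟩ := ENNReal.lt_iff_exists_nnreal_btwn.mp h
  obtain ⟨s', hs1, hs2⟩ := ENNReal.lt_iff_exists_nnreal_btwn.mp hr1
  have hs'0 : (0 : ℝ) < (s' : ℝ) := by
    have h0 : (0 : ℝ≥0∞) < (s' : ℝ≥0∞) := lt_of_le_of_lt zero_le hs1
    exact_mod_cast h0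
  have hst : (s' : ℝ) < (r : ℝ) := by exact_mod_cast hs2
  have hlowP : Φ.lowP (s' : ℝ) ≤ 0 := by
    by_contra hp
    push_neg at hp
    have : ENNReal.ofReal ((s' : ℝ)) ≤ Φ.Bdim :=
      le_iSup (fun u : {u : ℝ // 0 ≤ u ∧ (0 : EReal) < Φ.lowP u} => ENNReal.ofReal u.1)
        ⟨(s' : ℝ), hs'0.le, hp⟩
    rw [ENNReal.ofReal_coe_nnreal] at this
    exact absurd (lt_of_le_of_lt this hs1) (lt_irrefl _)
  have hzero : μH[(r : ℝ)] Φ.limitSet = 0 :=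
    Φ.hausdorffMeasure_limitSet_eq_zero hs'0 hst hlowP
  have : dimH Φ.limitSet ≤ (r : ℝ≥0∞) :=
    dimH_le_of_hausdorffMeasure_ne_top (d := r) (by rw [hzero]; exact ENNReal.zero_ne_top)
  exact absurd (lt_of_lt_of_le hr2 this) (lt_irrefl _)
end
end

section
/- Let Φ be a NCIFS. For each n ≥ 1 let 𝒰_n be a covering of the limit set of the shifted system Ψ_n (defined by Ψ_n^(j) = Φ^(n+j-1)), and let S(𝒰_n, t) = Σ_{U ∈ 𝒰_n} diam(U)^t. If t ≥ 0 satisfies liminf_{n→∞} Z_{n-1}(t)·S(𝒰_n, t) < ∞, then the t-dimensional Hausdorff measure of J(Φ) is finite, and in particular HD(J(Φ)) ≤ t. -/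
open Metric Set Filter Topology MeasureTheory
open scoped ENNReal

noncomputable section

/-- The limit set of the shifted system `Ψ_n` with `Ψ_n^{(j)} = Φ^{(n+j-1)}`,
i.e. of the system obtained by discarding the first `n` levels. -/
def NCIFS.shiftedLimitSet {d : ℕ} (Φ : NCIFS d) (n : ℕ) : Set (EuclideanSpace ℝ (Fin d)) :=
  ⋂ k, ⋃ ω : Φ.Word n (n + k), Φ.wMap n (n + k) ω '' Φ.X

open scoped NNReal

-- ================= auxiliary development =================
namespace NCIFS
variable {d : ℕ} (Φ : NCIFS d)

/-- restriction of a word to a left sub-interval -/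
def wres₁ {m n : ℕ} (k : ℕ) (hkn : k ≤ n) (ω : Φ.Word m n) : Φ.Word m k :=
  fun j => ω ⟨j.1, by
    have h := Finset.mem_Ico.mp j.2
    exact Finset.mem_Ico.mpr ⟨h.1, lt_of_lt_of_le h.2 hkn⟩⟩

/-- restriction of a word to a right sub-interval -/
def wres₂ {m n : ℕ} (k : ℕ) (hmk : m ≤ k) (ω : Φ.Word m n) : Φ.Word k n :=
  fun j => ω ⟨j.1, by
    have h := Finset.mem_Ico.mp j.2
    exact Finset.mem_Ico.mpr ⟨le_trans hmk h.1, h.2⟩⟩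

lemma segN_le_mul {m n : ℕ} (k : ℕ) (hmk : m ≤ k) (hkn : k ≤ n) (ω : Φ.Word m n) :
    Φ.segN m n ω ≤ Φ.segN m k (Φ.wres₁ k hkn ω) * Φ.segN k n (Φ.wres₂ k hmk ω) :=
  (Φ.segN_split m k n hmk hkn ω _ _ (fun _ _ _ => rfl) (fun _ _ _ => rfl)).1

lemma wMap_eq_comp {m n : ℕ} (k : ℕ) (hmk : m ≤ k) (hkn : k ≤ n) (ω : Φ.Word m n)
    {x : EuclideanSpace ℝ (Fin d)} (hx : x ∈ Φ.X) :
    Φ.wMap m n ω x = Φ.wMap m k (Φ.wres₁ k hkn ω) (Φ.wMap k n (Φ.wres₂ k hmk ω) x) :=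
  Φ.wMap_comp m k n hmk hkn ω _ _ (fun _ _ _ => rfl) (fun _ _ _ => rfl) x hx

lemma injOn_wMap (m n : ℕ) (ω : Φ.Word m n) : Set.InjOn (Φ.wMap m n ω) Φ.X := by
  intro u hu v hv h
  have hc := Φ.wMap_colip m n ω u hu v hv
  rw [h, dist_self] at hc
  have hK0 : (0:ℝ) < Φ.K := lt_of_lt_of_le one_pos Φ.hK
  have hpos : 0 < Φ.segN m n ω / Φ.K := div_pos (Φ.segN_pos m n ω) hK0
  have : dist u v ≤ 0 := by nlinarith [dist_nonneg (x := u) (y := v)]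
  exact dist_le_zero.mp this

/-- words over an empty interval are equal -/
lemma word_eq_of_le {m n : ℕ} (h : n ≤ m) (α β : Φ.Word m n) : α = β := by
  funext j
  exact absurd (Finset.mem_Ico.mp j.2) (by omega)

/-- extensionality by restriction -/
lemma word_ext {m n : ℕ} (k : ℕ) (hmk : m ≤ k) (hkn : k ≤ n) {α β : Φ.Word m n}
    (h₁ : Φ.wres₁ k hkn α = Φ.wres₁ k hkn β) (h₂ : Φ.wres₂ k hmk α = Φ.wres₂ k hmk β) :
    α = β := by
  funext j
  have hj := Finset.mem_Ico.mp j.2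
  rcases lt_or_ge j.1 k with h | h
  · have := congrFun h₁ ⟨j.1, Finset.mem_Ico.mpr ⟨hj.1, h⟩⟩
    simpa [wres₁] using this
  · have := congrFun h₂ ⟨j.1, Finset.mem_Ico.mpr ⟨h, hj.2⟩⟩
    simpa [wres₂] using this

end NCIFS
namespace NCIFSAux

variable {d : ℕ}

/-- the identity map from Euclidean space to the sup-metric pi space -/
def eF (d : ℕ) : EuclideanSpace ℝ (Fin d) ≃L[ℝ] (Fin d → ℝ) :=
  PiLp.continuousLinearEquiv 2 ℝ (fun _ : Fin d => ℝ)

/-- the bi-Lipschitz constant -/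
def cD (d : ℕ) : ℝ≥0 := (Fintype.card (Fin d) : ℝ≥0) ^ ((1:ℝ≥0∞)/2).toReal

lemma lip_eF : LipschitzWith 1 (eF d) := PiLp.lipschitzWith_ofLp 2 (fun _ : Fin d => ℝ)

lemma antilip_eF : AntilipschitzWith (cD d) (eF d) := PiLp.antilipschitzWith_ofLp 2 (fun _ : Fin d => ℝ)

lemma lip_eF_symm : LipschitzWith (cD d) (eF d).symm :=
  (antilip_eF (d := d)).to_rightInverse (eF d).right_inv

lemma pi_hausdorff_eq : (μH[(d:ℝ)] : Measure (Fin d → ℝ)) = volume := by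
  have h := MeasureTheory.hausdorffMeasure_pi_real (ι := Fin d)
  rw [Fintype.card_fin] at h
  exact h

lemma euc_measure_le (A : Set (EuclideanSpace ℝ (Fin d))) :
    μH[(d:ℝ)] A ≤ (cD d : ℝ≥0∞) ^ (d:ℝ) * volume (eF d '' A) := by
  have h1 : A = (eF d).symm '' (eF d '' A) := by
    rw [← Set.image_comp]; simp
  calc μH[(d:ℝ)] A = μH[(d:ℝ)] ((eF d).symm '' (eF d '' A)) := by rw [← h1]
    _ ≤ (cD d : ℝ≥0∞) ^ (d:ℝ) * μH[(d:ℝ)] (eF d '' A) :=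
        lip_eF_symm.hausdorffMeasure_image_le (by positivity) _
    _ = (cD d : ℝ≥0∞) ^ (d:ℝ) * volume (eF d '' A) := by rw [pi_hausdorff_eq]

lemma euc_measure_ge (A : Set (EuclideanSpace ℝ (Fin d))) :
    volume (eF d '' A) ≤ μH[(d:ℝ)] A := by
  have := lip_eF.hausdorffMeasure_image_le (K := 1) (f := ⇑(eF d))
    (by positivity : (0:ℝ) ≤ (d:ℝ)) A
  rw [pi_hausdorff_eq] at this
  simpa using this

lemma euc_closedBall_le (x : EuclideanSpace ℝ (Fin d)) {R : ℝ} (hR : 0 ≤ R) :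
    μH[(d:ℝ)] (closedBall x R) ≤ (cD d : ℝ≥0∞) ^ (d:ℝ) * ENNReal.ofReal ((2*R)^d) := by
  refine le_trans (euc_measure_le _) (mul_le_mul_right ?_ _)
  have hsub : eF d '' closedBall x R ⊆ closedBall (eF d x) R := by
    rintro _ ⟨v, hv, rfl⟩
    have := lip_eF (d := d) |>.dist_le_mul v x
    simp only [NNReal.coe_one, one_mul] at this
    exact mem_closedBall.mpr (le_trans this hv)
  calc volume (eF d '' closedBall x R) ≤ volume (closedBall (eF d x) R) := measure_mono hsub
    _ = ENNReal.ofReal ((2*R)^d) := by rw [Real.volume_pi_closedBall _ hR, Fintype.card_fin]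

lemma cD_pos (hd : 0 < d) : 0 < (cD d : ℝ) := by
  have : (0:ℝ≥0) < cD d := by
    apply NNReal.rpow_pos
    simpa using hd
  exact_mod_cast this

lemma euc_ball_ge (hd : 0 < d) (w : EuclideanSpace ℝ (Fin d)) {r : ℝ} (hr : 0 < r) :
    ENNReal.ofReal ((2*(r/(cD d : ℝ)))^d) ≤ μH[(d:ℝ)] (ball w r) := by
  refine le_trans ?_ (euc_measure_ge _)
  have hsub : ball (eF d w) (r / (cD d : ℝ)) ⊆ eF d '' ball w r := by
    intro z hz
    refine ⟨(eF d).symm z, ?_, by simp⟩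
    have hzd : dist ((eF d).symm z) w = dist ((eF d).symm z) ((eF d).symm (eF d w)) := by simp
    have hlip := lip_eF_symm (d := d) |>.dist_le_mul z (eF d w)
    rw [mem_ball, hzd]
    calc dist ((eF d).symm z) ((eF d).symm (eF d w)) ≤ (cD d : ℝ) * dist z (eF d w) := hlip
      _ < (cD d : ℝ) * (r / (cD d:ℝ)) := by
          apply mul_lt_mul_of_pos_left (mem_ball.mp hz) (cD_pos hd)
      _ = r := by
          have h0 := (cD_pos (d:=d) hd).ne'
          field_simp
  have hrc : 0 < r / (cD d : ℝ) := div_pos hr (cD_pos hd)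
  calc ENNReal.ofReal ((2*(r/(cD d : ℝ)))^d) = volume (ball (eF d w) (r / (cD d:ℝ))) := by
        rw [Real.volume_pi_ball _ hrc, Fintype.card_fin]
    _ ≤ volume (eF d '' ball w r) := measure_mono hsub

lemma convex_frontier_null {s : Set (EuclideanSpace ℝ (Fin d))} (hs : Convex ℝ s) :
    μH[(d:ℝ)] (frontier s) = 0 := by
  have himg : eF d '' frontier s = frontier (eF d '' s) :=
    (eF d).toHomeomorph.image_frontier s
  have hconv : Convex ℝ (eF d '' s) := hs.linear_image (eF d).toLinearEquiv.toLinearMap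
  have : volume (eF d '' frontier s) = 0 := by
    rw [himg]
    exact hconv.addHaar_frontier volume
  have h := euc_measure_le (frontier s)
  rw [this, mul_zero] at h
  exact le_antisymm h zero_le


end NCIFSAux

namespace NCIFS
open NCIFSAux

variable {d : ℕ} (Φ : NCIFS d)

local notation "E" => EuclideanSpace ℝ (Fin d)

lemma lipOn (m n : ℕ) (ω : Φ.Word m n) :
    LipschitzOnWith (Φ.segN m n ω).toNNReal (Φ.wMap m n ω) Φ.X := by
  apply LipschitzOnWith.of_dist_le_mul
  intro x hx y hy
  rw [Real.coe_toNNReal _ (Φ.segN_pos m n ω).le]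
  exact Φ.wMap_lip m n ω x hx y hy

lemma cyl_compact (m n : ℕ) (ω : Φ.Word m n) : IsCompact (Φ.wMap m n ω '' Φ.X) :=
  Φ.hX_compact.image_of_continuousOn (Φ.lipOn m n ω).continuousOn

lemma image_measure_le (m n : ℕ) (ω : Φ.Word m n) {s : Set (EuclideanSpace ℝ (Fin d))}
    (hs : s ⊆ Φ.X) :
    μH[(d:ℝ)] (Φ.wMap m n ω '' s) ≤
      (ENNReal.ofReal (Φ.segN m n ω)) ^ (d:ℝ) * μH[(d:ℝ)] s := by
  have h := ((Φ.lipOn m n ω).mono hs).hausdorffMeasure_image_le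
    (by positivity : (0:ℝ) ≤ (d:ℝ))
  exact h

/-- interior of `X` is nonempty -/
lemma interior_nonempty : (interior Φ.X).Nonempty := by
  by_contra h
  rw [Set.not_nonempty_iff_eq_empty] at h
  have := Φ.hX_regular
  rw [h, closure_empty] at this
  exact Set.not_nonempty_empty (this ▸ Φ.hX_nonempty)

/-- the cylinder set is contained in the closure of the image of the interior -/
lemma cyl_subset_closure (m : ℕ) (a : Φ.Word m (m+1)) :
    Φ.wMap m (m+1) a '' Φ.X ⊆ closure (Φ.wMap m (m+1) a '' interior Φ.X) := by
  have hcont : ContinuousOn (Φ.wMap m (m+1) a) (closure (interior Φ.X)) := by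
    rw [Φ.hX_regular]; exact (Φ.lipOn m (m+1) a).continuousOn
  calc Φ.wMap m (m+1) a '' Φ.X = Φ.wMap m (m+1) a '' closure (interior Φ.X) := by
        rw [Φ.hX_regular]
    _ ⊆ closure (Φ.wMap m (m+1) a '' interior Φ.X) := hcont.image_closure

/-- difference between a cylinder and the image of the interior is null -/
lemma cyl_diff_null (hd : 0 < d) (m : ℕ) (a : Φ.Word m (m+1)) :
    μH[(d:ℝ)] ((Φ.wMap m (m+1) a '' Φ.X) \ (Φ.wMap m (m+1) a '' interior Φ.X)) = 0 := by
  have hsub : (Φ.wMap m (m+1) a '' Φ.X) \ (Φ.wMap m (m+1) a '' interior Φ.X) ⊆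
      Φ.wMap m (m+1) a '' (Φ.X \ interior Φ.X) := by
    rintro z ⟨⟨u, hu, rfl⟩, hz⟩
    exact ⟨u, ⟨hu, fun hint => hz ⟨u, hint, rfl⟩⟩, rfl⟩
  have hfr : Φ.X \ interior Φ.X = frontier Φ.X := by
    rw [(Φ.hX_compact.isClosed).frontier_eq]
  have h1 : μH[(d:ℝ)] (Φ.wMap m (m+1) a '' (Φ.X \ interior Φ.X)) = 0 := by
    rw [hfr]
    have hle := Φ.image_measure_le m (m+1) a (s := frontier Φ.X)
      (by rw [← hfr]; exact diff_subset)
    rw [convex_frontier_null Φ.hX_convex, mul_zero] at hle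
    exact le_antisymm hle zero_le
  exact le_antisymm (le_trans (measure_mono hsub) h1.le) zero_le

/-- two distinct single-letter cylinders intersect in a null set -/
lemma single_cyl_aedisjoint (hd : 0 < d) (m : ℕ) (a b : Φ.Word m (m+1)) (hab : a ≠ b) :
    μH[(d:ℝ)] ((Φ.wMap m (m+1) a '' Φ.X) ∩ (Φ.wMap m (m+1) b '' Φ.X)) = 0 := by
  set Ua := Φ.wMap m (m+1) a '' interior Φ.X
  set Ub := Φ.wMap m (m+1) b '' interior Φ.X
  have hdisj := Φ.osc m a b hab
  have hsub : (Φ.wMap m (m+1) a '' Φ.X) ∩ (Φ.wMap m (m+1) b '' Φ.X) ⊆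
      ((Φ.wMap m (m+1) a '' Φ.X) \ Ua) ∪ ((Φ.wMap m (m+1) b '' Φ.X) \ Ub) := by
    intro z hz
    by_cases h1 : z ∈ Ua
    · by_cases h2 : z ∈ Ub
      · exact absurd (hdisj.ne_of_mem h1 h2) (fun h => h rfl)
      · exact Or.inr ⟨hz.2, h2⟩
    · exact Or.inl ⟨hz.1, h1⟩
  refine le_antisymm (le_trans (measure_mono hsub) ?_) zero_le
  refine le_trans (measure_union_le _ _) ?_
  rw [Φ.cyl_diff_null hd m a, Φ.cyl_diff_null hd m b, add_zero]

/-- distinct cylinders of the same depth intersect in null sets -/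
lemma cyl_aedisjoint (hd : 0 < d) :
    ∀ (p m n : ℕ), n - m ≤ p → ∀ α β : Φ.Word m n, α ≠ β →
      μH[(d:ℝ)] ((Φ.wMap m n α '' Φ.X) ∩ (Φ.wMap m n β '' Φ.X)) = 0 := by
  intro p
  induction p with
  | zero =>
    intro m n hmn α β hne
    exact absurd (Φ.word_eq_of_le (by omega) α β) hne
  | succ p ih =>
    intro m n hmn α β hne
    rcases le_or_gt n m with h | h
    · exact absurd (Φ.word_eq_of_le h α β) hne
    · -- m < n ; split at m+1
      have h1 : m ≤ m + 1 := Nat.le_succ m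
      have h2 : m + 1 ≤ n := h
      set a := Φ.wres₁ (m+1) h2 α with ha
      set b := Φ.wres₁ (m+1) h2 β with hb
      set α' := Φ.wres₂ (m+1) h1 α with hα'
      set β' := Φ.wres₂ (m+1) h1 β with hβ'
      have himα : Φ.wMap m n α '' Φ.X = Φ.wMap m (m+1) a '' (Φ.wMap (m+1) n α' '' Φ.X) := by
        rw [← Set.image_comp]
        apply Set.image_congr
        intro x hx
        exact Φ.wMap_eq_comp (m+1) h1 h2 α hx
      have himβ : Φ.wMap m n β '' Φ.X = Φ.wMap m (m+1) b '' (Φ.wMap (m+1) n β' '' Φ.X) := by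
        rw [← Set.image_comp]
        apply Set.image_congr
        intro x hx
        exact Φ.wMap_eq_comp (m+1) h1 h2 β hx
      by_cases hab : a = b
      · -- same first letter: use injectivity + induction
        have hne' : α' ≠ β' := by
          intro hcon
          exact hne (Φ.word_ext (m+1) h1 h2 (by rw [← ha, ← hb, hab]) (by rw [← hα', ← hβ', hcon]))
        have hXsub₁ : Φ.wMap (m+1) n α' '' Φ.X ⊆ Φ.X := (Φ.wMap_mapsTo (m+1) n α').image_subset
        have hXsub₂ : Φ.wMap (m+1) n β' '' Φ.X ⊆ Φ.X := (Φ.wMap_mapsTo (m+1) n β').image_subset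
        rw [himα, himβ, hab, ← (Φ.injOn_wMap m (m+1) b).image_inter hXsub₁ hXsub₂]
        have hle := Φ.image_measure_le m (m+1) b
          (s := (Φ.wMap (m+1) n α' '' Φ.X) ∩ (Φ.wMap (m+1) n β' '' Φ.X))
          (le_trans Set.inter_subset_left hXsub₁)
        rw [ih (m+1) n (by omega) α' β' hne', mul_zero] at hle
        exact le_antisymm hle zero_le
      · -- distinct first letters
        have hsub : (Φ.wMap m n α '' Φ.X) ∩ (Φ.wMap m n β '' Φ.X) ⊆
            (Φ.wMap m (m+1) a '' Φ.X) ∩ (Φ.wMap m (m+1) b '' Φ.X) := by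
          apply Set.inter_subset_inter
          · rw [himα]
            exact Set.image_mono (Φ.wMap_mapsTo (m+1) n α').image_subset
          · rw [himβ]
            exact Set.image_mono (Φ.wMap_mapsTo (m+1) n β').image_subset
        exact le_antisymm (le_trans (measure_mono hsub)
          (Φ.single_cyl_aedisjoint hd m a b hab).le) zero_le

lemma ofReal_pow_nat {x : ℝ} (hx : 0 < x) (k : ℕ) :
    ENNReal.ofReal (x ^ k) = (ENNReal.ofReal x) ^ ((k:ℕ):ℝ) := by
  rw [ENNReal.ofReal_rpow_of_pos hx, Real.rpow_natCast]

lemma image_cb_lower (hd : 0 < d) (m n : ℕ) (ω : Φ.Word m n) {w : EuclideanSpace ℝ (Fin d)}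
    {r : ℝ} (hr : 0 < r) (hcb : closedBall w r ⊆ Φ.X) :
    ENNReal.ofReal (((Φ.segN m n ω / Φ.K) * (2 * (r / (cD d : ℝ)))) ^ d) ≤
      μH[(d:ℝ)] (Φ.wMap m n ω '' closedBall w r) := by
  have hK0 : (0:ℝ) < Φ.K := lt_of_lt_of_le one_pos Φ.hK
  have hseg : 0 < Φ.segN m n ω := Φ.segN_pos m n ω
  set f := Φ.wMap m n ω
  set g := Function.invFunOn f Φ.X with hg_def
  -- inverse is Lipschitz on the image of X
  have hg : LipschitzOnWith (Φ.K / Φ.segN m n ω).toNNReal g (f '' Φ.X) := by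
    apply LipschitzOnWith.of_dist_le_mul
    rintro _ ⟨u, hu, rfl⟩ _ ⟨v, hv, rfl⟩
    have hgu : g (f u) = u := (Φ.injOn_wMap m n ω).leftInvOn_invFunOn hu
    have hgv : g (f v) = v := (Φ.injOn_wMap m n ω).leftInvOn_invFunOn hv
    rw [hgu, hgv, Real.coe_toNNReal _ (by positivity)]
    have hcolip := Φ.wMap_colip m n ω u hu v hv
    have h2 : (Φ.K / Φ.segN m n ω) * ((Φ.segN m n ω / Φ.K) * dist u v) ≤
        (Φ.K / Φ.segN m n ω) * dist (f u) (f v) :=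
      mul_le_mul_of_nonneg_left hcolip (by positivity)
    calc dist u v = (Φ.K / Φ.segN m n ω) * ((Φ.segN m n ω / Φ.K) * dist u v) := by
          field_simp
      _ ≤ (Φ.K / Φ.segN m n ω) * dist (f u) (f v) := h2
  have hCB : g '' (f '' closedBall w r) = closedBall w r :=
    (Φ.injOn_wMap m n ω).invFunOn_image hcb
  have hmono := (hg.mono (Set.image_mono (f := f) hcb)).hausdorffMeasure_image_le
    (by positivity : (0:ℝ) ≤ (d:ℝ))
  rw [hCB] at hmono
  -- lower bound for the closed ball
  have hlow : ENNReal.ofReal ((2 * (r / (cD d : ℝ))) ^ d) ≤ μH[(d:ℝ)] (closedBall w r) :=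
    le_trans (euc_ball_ge hd w hr) (measure_mono ball_subset_closedBall)
  -- combine
  set A := ENNReal.ofReal (Φ.segN m n ω / Φ.K) with hA
  have hBA : ((Φ.K / Φ.segN m n ω).toNNReal : ℝ≥0∞) = ENNReal.ofReal (Φ.K / Φ.segN m n ω) := rfl
  have hAB : A ^ ((d:ℕ):ℝ) * (ENNReal.ofReal (Φ.K / Φ.segN m n ω)) ^ ((d:ℕ):ℝ) = 1 := by
    rw [← ENNReal.mul_rpow_of_nonneg _ _ (by positivity : (0:ℝ) ≤ (d:ℝ)), hA,
      ← ENNReal.ofReal_mul (by positivity)]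
    have : Φ.segN m n ω / Φ.K * (Φ.K / Φ.segN m n ω) = 1 := by field_simp
    rw [this, ENNReal.ofReal_one, ENNReal.one_rpow]
  calc ENNReal.ofReal (((Φ.segN m n ω / Φ.K) * (2 * (r / (cD d : ℝ)))) ^ d)
      = ENNReal.ofReal ((Φ.segN m n ω / Φ.K) ^ d * (2 * (r / (cD d : ℝ))) ^ d) := by
        rw [mul_pow]
    _ = A ^ ((d:ℕ):ℝ) * ENNReal.ofReal ((2 * (r / (cD d : ℝ))) ^ d) := by
        rw [ENNReal.ofReal_mul (by positivity), ofReal_pow_nat (by positivity)]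
    _ ≤ A ^ ((d:ℕ):ℝ) * μH[(d:ℝ)] (closedBall w r) := mul_le_mul_right hlow _
    _ ≤ A ^ ((d:ℕ):ℝ) * ((ENNReal.ofReal (Φ.K / Φ.segN m n ω)) ^ ((d:ℕ):ℝ) *
          μH[(d:ℝ)] (f '' closedBall w r)) := by
        apply mul_le_mul_right
        rw [← hBA]
        exact hmono
    _ = (A ^ ((d:ℕ):ℝ) * (ENNReal.ofReal (Φ.K / Φ.segN m n ω)) ^ ((d:ℕ):ℝ)) *
          μH[(d:ℝ)] (f '' closedBall w r) := by ring
    _ = μH[(d:ℝ)] (f '' closedBall w r) := by rw [hAB, one_mul]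



lemma exists_S (hd : 0 < d) {x₀ : EuclideanSpace ℝ (Fin d)} {ρ₀ : ℝ} (hρ : 0 < ρ₀)
    (hball : ball x₀ ρ₀ ⊆ Φ.X) (m n : ℕ) (ω : Φ.Word m n)
    {x : EuclideanSpace ℝ (Fin d)} (hx : x ∈ Φ.wMap m n ω '' Φ.X)
    {s : ℝ} (hs0 : 0 < s) (hsle : s ≤ Φ.segN m n ω) :
    ∃ S : Set (EuclideanSpace ℝ (Fin d)), S ⊆ Φ.wMap m n ω '' Φ.X ∧ IsCompact S ∧
      S ⊆ closedBall x (s * (ρ₀ / 2 + Metric.diam Φ.X)) ∧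
      ENNReal.ofReal ((s * ρ₀ / (Φ.K * (cD d : ℝ))) ^ d) ≤ μH[(d:ℝ)] S := by
  obtain ⟨v, hv, hvx⟩ := hx
  have hseg := Φ.segN_pos m n ω
  have hK0 : (0:ℝ) < Φ.K := lt_of_lt_of_le one_pos Φ.hK
  set lam := s / Φ.segN m n ω with hlam
  have hlam0 : 0 < lam := div_pos hs0 hseg
  have hlam1 : lam ≤ 1 := (div_le_one hseg).mpr hsle
  set w := v + lam • (x₀ - v) with hw
  have hx₀ : x₀ ∈ Φ.X := hball (mem_ball_self hρ)
  have hr0 : 0 < lam * ρ₀ / 2 := by positivity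
  have hcb : closedBall w (lam * ρ₀ / 2) ⊆ Φ.X := by
    intro u hu
    have hz : x₀ + lam⁻¹ • (u - w) ∈ ball x₀ ρ₀ := by
      rw [mem_ball, dist_eq_norm]
      have he : x₀ + lam⁻¹ • (u - w) - x₀ = lam⁻¹ • (u - w) := by abel
      rw [he, norm_smul]
      have hun : ‖u - w‖ ≤ lam * ρ₀ / 2 := by
        rw [← dist_eq_norm]; exact mem_closedBall.mp hu
      calc ‖lam⁻¹‖ * ‖u - w‖ ≤ lam⁻¹ * (lam * ρ₀ / 2) := by
            rw [Real.norm_eq_abs, abs_of_pos (by positivity)]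
            exact mul_le_mul_of_nonneg_left hun (by positivity)
        _ = ρ₀ / 2 := by field_simp
        _ < ρ₀ := by linarith
    have hcomb := Φ.hX_convex hv (hball hz) (by linarith : (0:ℝ) ≤ 1 - lam) hlam0.le
      (by ring : 1 - lam + lam = 1)
    have hu_eq : u = (1 - lam) • v + lam • (x₀ + lam⁻¹ • (u - w)) := by
      have hlamne : lam ≠ 0 := hlam0.ne'
      rw [hw]
      match_scalars <;> (try field_simp) <;> ring
    rw [hu_eq]
    exact hcomb
  refine ⟨Φ.wMap m n ω '' closedBall w (lam * ρ₀ / 2), Set.image_mono hcb,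
    (isCompact_closedBall w _).image_of_continuousOn
      ((Φ.lipOn m n ω).continuousOn.mono hcb), ?_, ?_⟩
  · rintro _ ⟨c, hc, rfl⟩
    have hcX : c ∈ Φ.X := hcb hc
    have hlip := Φ.wMap_lip m n ω c hcX v hv
    have hdcw : dist c w ≤ lam * ρ₀ / 2 := mem_closedBall.mp hc
    have hdwv : dist w v ≤ lam * Metric.diam Φ.X := by
      rw [hw]
      have : v + lam • (x₀ - v) - v = lam • (x₀ - v) := by abel
      rw [dist_eq_norm, this, norm_smul, Real.norm_eq_abs, abs_of_pos hlam0]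
      have : ‖x₀ - v‖ = dist x₀ v := (dist_eq_norm x₀ v).symm
      rw [this]
      exact mul_le_mul_of_nonneg_left
        (Metric.dist_le_diam_of_mem Φ.hX_compact.isBounded hx₀ hv) hlam0.le
    rw [mem_closedBall, ← hvx]
    calc dist (Φ.wMap m n ω c) (Φ.wMap m n ω v) ≤ Φ.segN m n ω * dist c v := hlip
      _ ≤ Φ.segN m n ω * (lam * ρ₀ / 2 + lam * Metric.diam Φ.X) := by
          apply mul_le_mul_of_nonneg_left _ hseg.le
          calc dist c v ≤ dist c w + dist w v := dist_triangle c w v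
            _ ≤ lam * ρ₀ / 2 + lam * Metric.diam Φ.X := add_le_add hdcw hdwv
      _ = s * (ρ₀ / 2 + Metric.diam Φ.X) := by
          rw [hlam]; field_simp
  · have hlow := Φ.image_cb_lower hd m n ω hr0 hcb
    have hbase : ((Φ.segN m n ω / Φ.K) * (2 * ((lam * ρ₀ / 2) / (cD d : ℝ)))) =
        s * ρ₀ / (Φ.K * (cD d : ℝ)) := by
      rw [hlam]
      have hc0 := (cD_pos (d := d) hd).ne'
      field_simp
    rwa [hbase] at hlow

lemma cyl_measure_pos (hd : 0 < d) {x₀ : EuclideanSpace ℝ (Fin d)} {ρ₀ : ℝ} (hρ : 0 < ρ₀)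
    (hball : ball x₀ ρ₀ ⊆ Φ.X) (m n : ℕ) (ω : Φ.Word m n) :
    0 < μH[(d:ℝ)] (Φ.wMap m n ω '' Φ.X) := by
  have hcb : closedBall x₀ (ρ₀/2) ⊆ Φ.X :=
    le_trans (closedBall_subset_ball (by linarith)) hball
  have hK0 : (0:ℝ) < Φ.K := lt_of_lt_of_le one_pos Φ.hK
  have hlow := Φ.image_cb_lower hd m n ω (by positivity : (0:ℝ) < ρ₀/2) hcb
  have hpos : 0 < ENNReal.ofReal (((Φ.segN m n ω / Φ.K) * (2 * ((ρ₀/2) / (cD d : ℝ)))) ^ d) := by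
    apply ENNReal.ofReal_pos.mpr
    have := Φ.segN_pos m n ω
    have := cD_pos (d := d) hd
    positivity
  exact lt_of_lt_of_le (lt_of_lt_of_le hpos hlow)
    (measure_mono (Set.image_mono hcb))

lemma X_measure_ne_top : μH[(d:ℝ)] Φ.X ≠ ⊤ := by
  obtain ⟨R, hR0, hR⟩ := Φ.hX_compact.isBounded.subset_closedBall_lt 0 0
  have h := euc_closedBall_le (d := d) 0 hR0.le
  refine ne_top_of_le_ne_top ?_ (le_trans (measure_mono hR) h)
  exact ENNReal.mul_ne_top
    (ENNReal.rpow_ne_top_of_nonneg (by positivity) ENNReal.coe_ne_top)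
    ENNReal.ofReal_ne_top

lemma countable_word (hd : 0 < d) {x₀ : EuclideanSpace ℝ (Fin d)} {ρ₀ : ℝ} (hρ : 0 < ρ₀)
    (hball : ball x₀ ρ₀ ⊆ Φ.X) (m n : ℕ) : Countable (Φ.Word m n) := by
  have hcnt := MeasureTheory.Measure.countable_meas_pos_of_disjoint_of_meas_iUnion_ne_top₀
    (μ := μH[(d:ℝ)]) (As := fun α : Φ.Word m n => Φ.wMap m n α '' Φ.X)
    (fun α => (Φ.cyl_compact m n α).measurableSet.nullMeasurableSet)
    (fun α β hne => Φ.cyl_aedisjoint hd (n - m) m n le_rfl α β hne)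
    (by
      refine ne_top_of_le_ne_top Φ.X_measure_ne_top (measure_mono ?_)
      exact Set.iUnion_subset fun α => (Φ.wMap_mapsTo m n α).image_subset)
  have : {α : Φ.Word m n | 0 < μH[(d:ℝ)] (Φ.wMap m n α '' Φ.X)} = Set.univ :=
    Set.eq_univ_of_forall fun α => Φ.cyl_measure_pos hd hρ hball m n α
  rw [this] at hcnt
  exact Set.countable_univ_iff.mp hcnt

lemma finite_mem_cyl (hd : 0 < d) {x₀ : EuclideanSpace ℝ (Fin d)} {ρ₀ : ℝ} (hρ : 0 < ρ₀)
    (hball : ball x₀ ρ₀ ⊆ Φ.X) (m n : ℕ) (x : EuclideanSpace ℝ (Fin d)) :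
    {α : Φ.Word m n | x ∈ Φ.wMap m n α '' Φ.X}.Finite := by
  have hK0 : (0:ℝ) < Φ.K := lt_of_lt_of_le one_pos Φ.hK
  have hcD := cD_pos (d := d) hd
  set Dd := Metric.diam Φ.X with hDd
  have hDd0 : 0 ≤ Dd := Metric.diam_nonneg
  set C₀ : ℝ := (2 * (cD d : ℝ)^2 * Φ.K * (ρ₀ + Dd) / ρ₀)^d with hC₀
  set N₀ : ℕ := ⌈C₀⌉₊ with hN₀
  by_contra hinf
  obtain ⟨F, hFsub, hFcard⟩ := Set.Infinite.exists_subset_card_eq hinf (N₀ + 1)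
  have hFmem : ∀ α ∈ F, x ∈ Φ.wMap m n α '' Φ.X := fun α hα => hFsub hα
  have hFne : F.Nonempty := Finset.card_pos.mp (by omega)
  set s : ℝ := F.inf' hFne (fun α => Φ.segN m n α) with hs
  have hs0 : 0 < s := by
    rw [hs, Finset.lt_inf'_iff]
    exact fun α _ => Φ.segN_pos m n α
  have hsle : ∀ α ∈ F, s ≤ Φ.segN m n α := fun α hα => Finset.inf'_le _ hα
  -- choose the packing sets
  have hSdata : ∀ α ∈ F, ∃ S : Set (EuclideanSpace ℝ (Fin d)),
      S ⊆ Φ.wMap m n α '' Φ.X ∧ IsCompact S ∧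
      S ⊆ closedBall x (s * (ρ₀ / 2 + Dd)) ∧
      ENNReal.ofReal ((s * ρ₀ / (Φ.K * (cD d : ℝ))) ^ d) ≤ μH[(d:ℝ)] S :=
    fun α hα => Φ.exists_S hd hρ hball m n α (hFmem α hα) hs0 (hsle α hα)
  choose! S hS1 hS2 hS3 hS4 using hSdata
  set LB := ENNReal.ofReal ((s * ρ₀ / (Φ.K * (cD d : ℝ))) ^ d) with hLB
  have hLB0 : LB ≠ 0 := by
    rw [hLB]
    exact (ENNReal.ofReal_pos.mpr (by positivity)).ne'
  have hLBtop : LB ≠ ⊤ := ENNReal.ofReal_ne_top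
  -- pairwise a.e. disjoint
  have hae : (↑F : Set (Φ.Word m n)).Pairwise (Function.onFun (MeasureTheory.AEDisjoint μH[(d:ℝ)]) S) := by
    intro α hα β hβ hne
    have hsub : S α ∩ S β ⊆ (Φ.wMap m n α '' Φ.X) ∩ (Φ.wMap m n β '' Φ.X) :=
      Set.inter_subset_inter (hS1 α hα) (hS1 β hβ)
    exact measure_mono_null hsub (Φ.cyl_aedisjoint hd (n - m) m n le_rfl α β hne)
  have hsum : ∑ α ∈ F, μH[(d:ℝ)] (S α) = μH[(d:ℝ)] (⋃ α ∈ F, S α) :=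
    (measure_biUnion_finset₀ hae (fun α hα => (hS2 α hα).measurableSet.nullMeasurableSet)).symm
  have hchain : ((N₀ + 1 : ℕ) : ℝ≥0∞) * LB ≤
      (cD d : ℝ≥0∞) ^ ((d:ℕ):ℝ) * ENNReal.ofReal ((2 * (s * (ρ₀ / 2 + Dd)))^d) := by
    calc ((N₀ + 1 : ℕ) : ℝ≥0∞) * LB = ∑ _α ∈ F, LB := by
          rw [Finset.sum_const, hFcard, nsmul_eq_mul]
      _ ≤ ∑ α ∈ F, μH[(d:ℝ)] (S α) := Finset.sum_le_sum (fun α hα => hS4 α hα)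
      _ = μH[(d:ℝ)] (⋃ α ∈ F, S α) := hsum
      _ ≤ μH[(d:ℝ)] (closedBall x (s * (ρ₀ / 2 + Dd))) := by
          apply measure_mono
          exact Set.iUnion₂_subset hS3
      _ ≤ (cD d : ℝ≥0∞) ^ ((d:ℕ):ℝ) * ENNReal.ofReal ((2 * (s * (ρ₀ / 2 + Dd)))^d) :=
          euc_closedBall_le x (by positivity)
  -- the right side is at most ofReal C₀ * LB
  have hub : (cD d : ℝ≥0∞) ^ ((d:ℕ):ℝ) * ENNReal.ofReal ((2 * (s * (ρ₀ / 2 + Dd)))^d) ≤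
      ENNReal.ofReal C₀ * LB := by
    have h1 : (cD d : ℝ≥0∞) = ENNReal.ofReal (cD d : ℝ) := by
      rw [ENNReal.ofReal_coe_nnreal]
    rw [h1, ← ofReal_pow_nat (by exact_mod_cast hcD), ← ENNReal.ofReal_mul (by positivity),
      hLB, ← ENNReal.ofReal_mul (by positivity)]
    apply ENNReal.ofReal_le_ofReal
    rw [← mul_pow, hC₀, ← mul_pow]
    apply pow_le_pow_left₀ (by positivity)
    have hexp : 2 * (cD d : ℝ)^2 * Φ.K * (ρ₀ + Dd) / ρ₀ * (s * ρ₀ / (Φ.K * (cD d : ℝ))) =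
        (cD d : ℝ) * (2 * (s * (ρ₀ + Dd))) := by
      field_simp
    rw [hexp]
    have : (2 : ℝ) * (s * (ρ₀ / 2 + Dd)) ≤ 2 * (s * (ρ₀ + Dd)) := by nlinarith
    nlinarith [hcD.le]
  have hfin : ((N₀ + 1 : ℕ) : ℝ≥0∞) ≤ ENNReal.ofReal C₀ := by
    have := le_trans hchain hub
    exact (ENNReal.mul_le_mul_iff_left hLB0 hLBtop).mp this
  have : ((N₀ + 1 : ℕ) : ℝ≥0∞) ≤ (N₀ : ℝ≥0∞) := by
    refine le_trans hfin ?_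
    calc ENNReal.ofReal C₀ ≤ ENNReal.ofReal (N₀ : ℝ) :=
          ENNReal.ofReal_le_ofReal (Nat.le_ceil C₀)
      _ = (N₀ : ℝ≥0∞) := ENNReal.ofReal_natCast N₀
  have := Nat.cast_le (α := ℝ≥0∞) |>.mp this
  omega



lemma shifted_antitone (n k : ℕ) :
    (⋃ β : Φ.Word n (n+(k+1)), Φ.wMap n (n+(k+1)) β '' Φ.X) ⊆
      ⋃ β : Φ.Word n (n+k), Φ.wMap n (n+k) β '' Φ.X := by
  intro z hz
  rw [Set.mem_iUnion] at hz ⊢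
  obtain ⟨β, y, hy, rfl⟩ := hz
  refine ⟨Φ.wres₁ (n+k) (by omega) β, ?_⟩
  rw [Φ.wMap_eq_comp (n+k) (by omega) (by omega) β hy]
  exact ⟨Φ.wMap (n+k) (n+(k+1)) (Φ.wres₂ (n+k) (by omega) β) y,
    Φ.wMap_mapsTo (n+k) (n+(k+1)) _ hy, rfl⟩

lemma limitSet_subset_shifted (hd : 0 < d) {x₀ : EuclideanSpace ℝ (Fin d)} {ρ₀ : ℝ}
    (hρ : 0 < ρ₀) (hball : ball x₀ ρ₀ ⊆ Φ.X) (n : ℕ) :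
    Φ.limitSet ⊆ ⋃ α : Φ.Word 0 n, Φ.wMap 0 n α '' (Φ.shiftedLimitSet n ∩ Φ.X) := by
  intro x hx
  set A : ℕ → Set (EuclideanSpace ℝ (Fin d)) :=
    fun k => ⋃ β : Φ.Word n (n+k), Φ.wMap n (n+k) β '' Φ.X with hA
  have hAanti : ∀ j k, j ≤ k → A k ⊆ A j := by
    intro j k hjk
    induction k with
    | zero => have : j = 0 := by omega
              subst this; exact le_refl _
    | succ k ih =>
      rcases Nat.lt_or_ge j (k+1) with h | h
      · exact le_trans (Φ.shifted_antitone n k) (ih (by omega))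
      · have : j = k + 1 := by omega
        subst this; exact le_refl _
  have hx' : ∀ N, x ∈ ⋃ ω : Φ.Word 0 N, Φ.wMap 0 N ω '' Φ.X := by
    intro N
    have hx2 : x ∈ ⋂ N, ⋃ ω : Φ.Word 0 N, Φ.wMap 0 N ω '' Φ.X := hx
    exact Set.mem_iInter.mp hx2 N
  have hW : ∀ k, ∃ α : Φ.Word 0 n, x ∈ Φ.wMap 0 n α '' (A k ∩ Φ.X) := by
    intro k
    have hx2 := hx' (n + k)
    rw [Set.mem_iUnion] at hx2
    obtain ⟨ω, y, hy, hxy⟩ := hx2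
    refine ⟨Φ.wres₁ n (by omega) ω,
      ⟨Φ.wMap n (n+k) (Φ.wres₂ n (by omega) ω) y, ⟨?_, Φ.wMap_mapsTo _ _ _ hy⟩, ?_⟩⟩
    · rw [hA]
      exact Set.mem_iUnion.mpr ⟨_, ⟨y, hy, rfl⟩⟩
    · rw [← hxy]
      exact (Φ.wMap_eq_comp n (by omega) (by omega) ω hy).symm
  choose f hf using hW
  have hWfin : {α : Φ.Word 0 n | x ∈ Φ.wMap 0 n α '' Φ.X}.Finite :=
    Φ.finite_mem_cyl hd hρ hball 0 n x
  have hfmem : ∀ k, f k ∈ {α : Φ.Word 0 n | x ∈ Φ.wMap 0 n α '' Φ.X} := by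
    intro k
    have := hf k
    exact Set.image_mono Set.inter_subset_right this
  haveI := hWfin.to_subtype
  set g : ℕ → hWfin.toFinset := fun k => ⟨f k, hWfin.mem_toFinset.mpr (hfmem k)⟩ with hg
  haveI : Finite hWfin.toFinset := Finite.of_fintype _
  obtain ⟨α₀, hα₀⟩ := Finite.exists_infinite_fiber g
  have hinf : {k : ℕ | g k = α₀}.Infinite := by
    rw [← Set.infinite_coe_iff]
    exact hα₀
  have hα₀W : ∀ k, x ∈ Φ.wMap 0 n (α₀ : Φ.Word 0 n) '' (A k ∩ Φ.X) := by
    intro k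
    obtain ⟨k', hk', hgt⟩ := hinf.exists_gt k
    have hfk : f k' = (α₀ : Φ.Word 0 n) := by
      have : (g k' : Φ.Word 0 n) = (α₀ : Φ.Word 0 n) := by rw [hk']
      simpa [hg] using this
    have hxk := hf k'
    rw [hfk] at hxk
    exact Set.image_mono (Set.inter_subset_inter_left _ (hAanti k k' hgt.le)) hxk
  obtain ⟨y₀, ⟨hy₀A, hy₀X⟩, hy₀⟩ := hα₀W 0
  have hyk : ∀ k, y₀ ∈ A k := by
    intro k
    obtain ⟨y, ⟨hyA, hyX⟩, hy⟩ := hα₀W k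
    have heq : y = y₀ := Φ.injOn_wMap 0 n _ hyX hy₀X (hy.trans hy₀.symm)
    rwa [heq] at hyA
  refine Set.mem_iUnion.mpr ⟨(α₀ : Φ.Word 0 n), y₀, ⟨?_, hy₀X⟩, hy₀⟩
  exact Set.mem_iInter.mpr hyk

lemma ediam_image_le (m n : ℕ) (ω : Φ.Word m n) {s : Set (EuclideanSpace ℝ (Fin d))}
    (hs : s ⊆ Φ.X) :
    EMetric.diam (Φ.wMap m n ω '' s) ≤ ENNReal.ofReal (Φ.segN m n ω) * EMetric.diam s := by
  apply EMetric.diam_le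
  rintro _ ⟨u, hu, rfl⟩ _ ⟨v, hv, rfl⟩
  calc edist (Φ.wMap m n ω u) (Φ.wMap m n ω v)
      = ENNReal.ofReal (dist (Φ.wMap m n ω u) (Φ.wMap m n ω v)) := edist_dist _ _
    _ ≤ ENNReal.ofReal (Φ.segN m n ω * dist u v) :=
        ENNReal.ofReal_le_ofReal (Φ.wMap_lip m n ω u (hs hu) v (hs hv))
    _ = ENNReal.ofReal (Φ.segN m n ω) * ENNReal.ofReal (dist u v) :=
        ENNReal.ofReal_mul (Φ.segN_pos m n ω).le
    _ = ENNReal.ofReal (Φ.segN m n ω) * edist u v := by rw [edist_dist]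
    _ ≤ ENNReal.ofReal (Φ.segN m n ω) * EMetric.diam s :=
        mul_le_mul_right (EMetric.edist_le_diam_of_mem hu hv) _


end NCIFS



/-- If, for each `n`, `𝒰 n` is a (countable) covering of the limit set of the
shifted system starting at level `n`, with Hausdorff sum `S(𝒰_n,t) = Σ_U diam(U)^t`, and if
`liminf_n Z_{n-1}(t)·S(𝒰_n,t) < ∞`, then the `t`-dimensional Hausdorff measure of `J(Φ)` is
finite; in particular `HD(J(Φ)) ≤ t`. -/
theorem NCIFS.dimH_le_of_covers {d : ℕ} (Φ : NCIFS d) (t : ℝ) (ht : 0 ≤ t)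
    (𝒰 : ℕ → ℕ → Set (EuclideanSpace ℝ (Fin d)))
    (hcover : ∀ n, Φ.shiftedLimitSet n ⊆ ⋃ i, 𝒰 n i)
    (hliminf : liminf
        (fun n : ℕ => Φ.Z n t * ∑' i, EMetric.diam (𝒰 n i) ^ t) atTop < ⊤) :
    μH[t] Φ.limitSet < ⊤ ∧ dimH Φ.limitSet ≤ ENNReal.ofReal t := by
  have main : μH[t] Φ.limitSet < ⊤ := by
    rcases Nat.eq_zero_or_pos d with hd0 | hd
    · subst hd0
      haveI : Subsingleton (EuclideanSpace ℝ (Fin 0)) :=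
        ⟨fun a b => by ext i; exact i.elim0⟩
      have hsub : Φ.limitSet.Subsingleton := Set.subsingleton_of_subsingleton
      exact lt_of_le_of_lt (MeasureTheory.Measure.hausdorffMeasure_le_one_of_subsingleton hsub ht)
        (by norm_num)
    · obtain ⟨x₀, hx₀⟩ := Φ.interior_nonempty
      obtain ⟨ρ₀, hρ, hballi⟩ := Metric.isOpen_iff.mp isOpen_interior x₀ hx₀
      have hball : ball x₀ ρ₀ ⊆ Φ.X := le_trans hballi interior_subset
      set L := liminf (fun n : ℕ => Φ.Z n t * ∑' i, EMetric.diam (𝒰 n i) ^ t) atTop with hL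
      have hL1 : L < L + 1 := ENNReal.lt_add_right hliminf.ne one_ne_zero
      have hfreq : ∃ᶠ n in atTop,
          Φ.Z n t * ∑' i, EMetric.diam (𝒰 n i) ^ t < L + 1 :=
        frequently_lt_of_liminf_lt (by isBoundedDefault) hL1
      obtain ⟨φ, hφmono, hφ⟩ := Filter.extraction_of_frequently_atTop hfreq
      haveI hcw : ∀ k : ℕ, Countable (Φ.Word 0 (φ k) × ℕ) := fun k =>
        haveI := Φ.countable_word hd hρ hball 0 (φ k)
        inferInstance
      -- the coverings
      have hcover_main : ∀ k, Φ.limitSet ⊆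
          ⋃ p : Φ.Word 0 (φ k) × ℕ, Φ.wMap 0 (φ k) p.1 '' (𝒰 (φ k) p.2 ∩ Φ.X) := by
        intro k x hx
        have h1 := Φ.limitSet_subset_shifted hd hρ hball (φ k) hx
        rw [Set.mem_iUnion] at h1
        obtain ⟨α, y, ⟨hysh, hyX⟩, hxy⟩ := h1
        obtain ⟨i, hi⟩ := Set.mem_iUnion.mp (hcover (φ k) hysh)
        exact Set.mem_iUnion.mpr ⟨(α, i), ⟨y, ⟨hi, hyX⟩, hxy⟩⟩
      have hdiam : ∀ k (p : Φ.Word 0 (φ k) × ℕ),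
          EMetric.diam (Φ.wMap 0 (φ k) p.1 '' (𝒰 (φ k) p.2 ∩ Φ.X)) ≤
            ENNReal.ofReal (Φ.η ^ (φ k)) * EMetric.diam Φ.X := by
        intro k p
        refine le_trans (Φ.ediam_image_le 0 (φ k) p.1 Set.inter_subset_right) ?_
        apply mul_le_mul'
        · apply ENNReal.ofReal_le_ofReal
          simpa using Φ.segN_contract 0 (φ k) p.1
        · exact EMetric.diam_mono Set.inter_subset_right
      have hmesh : Tendsto (fun k => ENNReal.ofReal (Φ.η ^ (φ k)) * EMetric.diam Φ.X)
          atTop (𝓝 0) := by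
        have h1 : Tendsto (fun k : ℕ => Φ.η ^ (φ k)) atTop (𝓝 0) :=
          (tendsto_pow_atTop_nhds_zero_of_lt_one Φ.hη_pos.le Φ.hη_lt).comp
            hφmono.tendsto_atTop
        have h2 : Tendsto (fun k : ℕ => ENNReal.ofReal (Φ.η ^ (φ k))) atTop (𝓝 0) := by
          have := ENNReal.tendsto_ofReal h1
          rwa [ENNReal.ofReal_zero] at this
        have h3 := ENNReal.Tendsto.mul_const h2
          (Or.inr Φ.hX_compact.isBounded.ediam_ne_top)
        rwa [zero_mul] at h3
      have hbound := MeasureTheory.Measure.hausdorffMeasure_le_liminf_tsum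
        (ι := fun k : ℕ => Φ.Word 0 (φ k) × ℕ) t Φ.limitSet
        (fun k => ENNReal.ofReal (Φ.η ^ (φ k)) * EMetric.diam Φ.X) hmesh
        (fun k p => Φ.wMap 0 (φ k) p.1 '' (𝒰 (φ k) p.2 ∩ Φ.X))
        (Eventually.of_forall hdiam) (Eventually.of_forall hcover_main)
      have hsum : ∀ k, (∑' p : Φ.Word 0 (φ k) × ℕ,
          EMetric.diam (Φ.wMap 0 (φ k) p.1 '' (𝒰 (φ k) p.2 ∩ Φ.X)) ^ t) ≤
          Φ.Z (φ k) t * ∑' i, EMetric.diam (𝒰 (φ k) i) ^ t := by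
        intro k
        set N := φ k
        calc (∑' p : Φ.Word 0 N × ℕ,
            EMetric.diam (Φ.wMap 0 N p.1 '' (𝒰 N p.2 ∩ Φ.X)) ^ t)
            ≤ ∑' p : Φ.Word 0 N × ℕ,
              (ENNReal.ofReal (Φ.segN 0 N p.1)) ^ t * EMetric.diam (𝒰 N p.2) ^ t := by
              apply ENNReal.tsum_le_tsum
              intro p
              rw [← ENNReal.mul_rpow_of_nonneg _ _ ht]
              apply ENNReal.rpow_le_rpow _ ht
              refine le_trans (Φ.ediam_image_le 0 N p.1 Set.inter_subset_right) ?_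
              exact mul_le_mul_right (EMetric.diam_mono Set.inter_subset_left) _
          _ = (∑' α : Φ.Word 0 N, (ENNReal.ofReal (Φ.segN 0 N α)) ^ t) *
                (∑' i, EMetric.diam (𝒰 N i) ^ t) := by
              rw [ENNReal.tsum_prod (f := fun (α : Φ.Word 0 N) (i : ℕ) =>
                (ENNReal.ofReal (Φ.segN 0 N α)) ^ t * EMetric.diam (𝒰 N i) ^ t)]
              simp_rw [ENNReal.tsum_mul_left]
              rw [ENNReal.tsum_mul_right]
          _ = Φ.Z N t * ∑' i, EMetric.diam (𝒰 N i) ^ t := by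
              congr 1
              apply tsum_congr
              intro α
              rw [ENNReal.ofReal_rpow_of_pos (Φ.segN_pos 0 N α)]
      refine lt_of_le_of_lt (le_trans hbound ?_) (?_ : L + 1 < ⊤)
      · have hev : ∀ k, (∑' p : Φ.Word 0 (φ k) × ℕ,
            EMetric.diam (Φ.wMap 0 (φ k) p.1 '' (𝒰 (φ k) p.2 ∩ Φ.X)) ^ t) ≤ L + 1 :=
          fun k => le_of_lt (lt_of_le_of_lt (hsum k) (hφ k))
        calc liminf (fun k => ∑' p : Φ.Word 0 (φ k) × ℕ,
              EMetric.diam (Φ.wMap 0 (φ k) p.1 '' (𝒰 (φ k) p.2 ∩ Φ.X)) ^ t) atTop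
            ≤ liminf (fun _ : ℕ => L + 1) atTop :=
              Filter.liminf_le_liminf (Eventually.of_forall hev)
          _ = L + 1 := Filter.liminf_const _
      · exact ENNReal.add_lt_top.mpr ⟨hliminf, ENNReal.one_lt_top⟩
  refine ⟨main, ?_⟩
  have hne : μH[((t.toNNReal : ℝ≥0) : ℝ)] Φ.limitSet ≠ ⊤ := by
    rw [Real.coe_toNNReal t ht]
    exact main.ne
  have hdim := dimH_le_of_hausdorffMeasure_ne_top hne
  have hofr : ENNReal.ofReal t = ((t.toNNReal : ℝ≥0) : ℝ≥0∞) := rfl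
  rw [hofr]
  exact hdim
end
end

section
/- Let Φ be a weakly balanced finite NCIFS such that both limits a = lim_{n→∞} (1/n) log #I^(n) and b = lim_{n→∞} (1/n) log(1/c̄_n) exist, are finite and positive, where c̄_n = max_{i ∈ I^(n)} ‖Dφ_i^(n)‖. Then B(Φ) = a/b: the partition function Z_n(t) tends to infinity for t < a/b and to zero for t > a/b. -/
open Metric Set Filter Topology MeasureTheory
open scoped ENNReal

noncomputable section

/-! ### Auxiliary lemmas -/

section CesaroAux

open Finset

lemma aux_cesaro_atTop {f : ℕ → ℝ} (h : Tendsto f atTop atTop) :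
    Tendsto (fun n : ℕ => (∑ k ∈ Finset.range n, f k) / n) atTop atTop := by
  rw [Filter.tendsto_atTop]
  intro M
  have h2 : Tendsto (fun k => min (f k) (M + 1)) atTop (𝓝 (M + 1)) := by
    have hc : Tendsto (fun _ : ℕ => M + 1) atTop (𝓝 (M + 1)) := tendsto_const_nhds
    refine hc.congr' ?_
    filter_upwards [h.eventually_ge_atTop (M + 1)] with k hk
    exact (min_eq_right hk).symm
  have h3 := h2.cesaro
  have h4 : ∀ᶠ n : ℕ in atTop, M ≤ (n : ℝ)⁻¹ • ∑ i ∈ Finset.range n, min (f i) (M + 1) :=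
    h3.eventually (eventually_ge_nhds (by linarith))
  filter_upwards [h4] with n hn
  refine le_trans hn ?_
  rw [smul_eq_mul, div_eq_inv_mul]
  exact mul_le_mul_of_nonneg_left
    (Finset.sum_le_sum fun i _ => min_le_left _ _) (by positivity)

lemma aux_tendsto_atTop_of_div {f : ℕ → ℝ} {c : ℝ} (hc : 0 < c)
    (h : Tendsto (fun k : ℕ => f k / k) atTop (𝓝 c)) : Tendsto f atTop atTop := by
  have h1 : ∀ᶠ k : ℕ in atTop, c / 2 * k ≤ f k := by
    filter_upwards [h.eventually (eventually_ge_nhds (by linarith : c / 2 < c)),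
      eventually_ge_atTop 1] with k h1 h2
    have hk : (0 : ℝ) < k := by exact_mod_cast h2
    rw [le_div_iff₀ hk] at h1
    linarith
  exact tendsto_atTop_mono' _ h1 (tendsto_natCast_atTop_atTop.const_mul_atTop (by linarith))

lemma aux_cesaro_div_atTop {f : ℕ → ℝ} {c : ℝ} (hc : 0 < c)
    (h : Tendsto (fun k : ℕ => f k / k) atTop (𝓝 c)) :
    Tendsto (fun n : ℕ => (∑ k ∈ Finset.range n, f k) / n) atTop atTop :=
  aux_cesaro_atTop (aux_tendsto_atTop_of_div hc h)

lemma aux_cesaro_div_atBot {f : ℕ → ℝ} {c : ℝ} (hc : c < 0)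
    (h : Tendsto (fun k : ℕ => f k / k) atTop (𝓝 c)) :
    Tendsto (fun n : ℕ => (∑ k ∈ Finset.range n, f k) / n) atTop atBot := by
  have h' : Tendsto (fun k : ℕ => (fun m : ℕ => -f m) k / k) atTop (𝓝 (-c)) := by
    have := h.neg
    simpa [neg_div] using this
  have h2 := aux_cesaro_div_atTop (by linarith : (0:ℝ) < -c) h'
  rw [← tendsto_neg_atTop_iff]
  refine h2.congr fun n => ?_
  simp [neg_div]

lemma aux_tendsto_atTop_of_div_atTop {f : ℕ → ℝ}
    (h : Tendsto (fun n : ℕ => f n / n) atTop atTop) : Tendsto f atTop atTop := by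
  rw [Filter.tendsto_atTop]
  intro M
  filter_upwards [h.eventually_ge_atTop (max M 0), eventually_ge_atTop 1] with n h1 h2
  have hn : (0 : ℝ) < n := by exact_mod_cast h2
  have hn1 : (1 : ℝ) ≤ n := by exact_mod_cast h2
  rw [le_div_iff₀ hn] at h1
  nlinarith [le_max_left M 0, le_max_right M 0]

lemma aux_tendsto_atBot_of_div_atBot {f : ℕ → ℝ}
    (h : Tendsto (fun n : ℕ => f n / n) atTop atBot) : Tendsto f atTop atBot := by
  have h1 : Tendsto (fun n : ℕ => -f n / n) atTop atTop := by
    simp only [neg_div]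
    exact tendsto_neg_atTop_iff.mpr h
  exact tendsto_neg_atTop_iff.mp (aux_tendsto_atTop_of_div_atTop h1)

end CesaroAux

namespace NCIFS

variable {d : ℕ} (Φ : NCIFS d)

lemma word_eq_single (n : ℕ) (ω : Φ.Word n (n + 1)) :
    ω = Φ.single n (ω ⟨n, by simp⟩) := by
  funext j
  rcases j with ⟨j, hj⟩
  have hjn : j = n := by
    have := Finset.mem_Ico.mp hj; omega
  subst hjn
  rfl

lemma cmin_le_Dnorm {n : ℕ} [Finite (Φ.I n)] (i : Φ.I n) : Φ.cmin n ≤ Φ.Dnorm n i :=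
  ciInf_le (Set.Finite.bddBelow (Set.finite_range _)) i

lemma Dnorm_le_cmax {n : ℕ} [Finite (Φ.I n)] (i : Φ.I n) : Φ.Dnorm n i ≤ Φ.cmax n :=
  le_ciSup (Set.Finite.bddAbove (Set.finite_range _)) i

lemma cmin_pos (n : ℕ) [Finite (Φ.I n)] : 0 < Φ.cmin n := by
  haveI := Φ.hI_ne n
  obtain ⟨i, hi⟩ := Finite.exists_min (Φ.Dnorm n)
  exact lt_of_lt_of_le (Φ.segN_pos _ _ _) (le_ciInf hi)

lemma cmax_pos (n : ℕ) [Finite (Φ.I n)] : 0 < Φ.cmax n := by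
  haveI := Φ.hI_ne n
  obtain ⟨i⟩ := Φ.hI_ne n
  exact lt_of_lt_of_le (Φ.segN_pos _ _ _) (Φ.Dnorm_le_cmax i)

lemma segN_succ (n : ℕ) (ω : Φ.Word 0 (n + 1)) :
    ∃ (ω₁ : Φ.Word 0 n) (i : Φ.I n),
      Φ.segN 0 (n + 1) ω ≤ Φ.segN 0 n ω₁ * Φ.Dnorm n i ∧
        Φ.segN 0 n ω₁ * Φ.Dnorm n i ≤ Φ.K * Φ.segN 0 (n + 1) ω := by
  have hmem : ∀ j : Finset.Ico 0 n, (j : ℕ) ∈ Finset.Ico 0 (n + 1) := fun j => by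
    have := Finset.mem_Ico.mp j.2
    exact Finset.mem_Ico.mpr ⟨Nat.zero_le _, by omega⟩
  have hmem2 : ∀ j : Finset.Ico n (n + 1), (j : ℕ) ∈ Finset.Ico 0 (n + 1) := fun j => by
    have := Finset.mem_Ico.mp j.2
    exact Finset.mem_Ico.mpr ⟨Nat.zero_le _, by omega⟩
  have hsplit := Φ.segN_split 0 n (n + 1) (Nat.zero_le n) (Nat.le_succ n) ω
      (fun j => ω ⟨j.1, hmem j⟩) (fun j => ω ⟨j.1, hmem2 j⟩)
      (fun j h₁ h₂ => rfl) (fun j h₁ h₂ => rfl)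
  have hs : Φ.segN n (n + 1) (fun j => ω ⟨j.1, hmem2 j⟩)
      = Φ.Dnorm n ((fun (j : Finset.Ico n (n + 1)) => ω ⟨j.1, hmem2 j⟩) ⟨n, by simp⟩) := by
    rw [NCIFS.Dnorm]
    congr 1
    exact Φ.word_eq_single n _
  exact ⟨fun j => ω ⟨j.1, hmem j⟩, _, hs ▸ hsplit.1, hs ▸ hsplit.2⟩

lemma segN_le_prod [∀ k, Finite (Φ.I k)] (n : ℕ) (ω : Φ.Word 0 n) :
    Φ.segN 0 n ω ≤ ∏ k ∈ Finset.range n, Φ.cmax k := by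
  induction n with
  | zero => simpa using Φ.segN_contract 0 0 ω
  | succ n ih =>
    obtain ⟨ω₁, i, h1, _⟩ := Φ.segN_succ n ω
    rw [Finset.prod_range_succ]
    calc Φ.segN 0 (n + 1) ω ≤ Φ.segN 0 n ω₁ * Φ.Dnorm n i := h1
    _ ≤ (∏ k ∈ Finset.range n, Φ.cmax k) * Φ.cmax n :=
      mul_le_mul (ih ω₁) (Φ.Dnorm_le_cmax i) (Φ.segN_pos _ _ _).le
        (Finset.prod_nonneg fun k _ => (Φ.cmax_pos k).le)

lemma prod_le_segN [∀ k, Finite (Φ.I k)] (n : ℕ) (ω : Φ.Word 0 (n + 1)) :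
    ∏ k ∈ Finset.range (n + 1), Φ.cmin k ≤ Φ.K ^ (n + 1) * Φ.segN 0 (n + 1) ω := by
  have hK0 : (0:ℝ) < Φ.K := lt_of_lt_of_le one_pos Φ.hK
  induction n with
  | zero =>
    have hs : Φ.segN 0 1 ω = Φ.Dnorm 0 (ω ⟨0, by simp⟩) := by
      rw [NCIFS.Dnorm]
      congr 1
      exact Φ.word_eq_single 0 ω
    have h1 : Φ.cmin 0 ≤ Φ.segN 0 1 ω := hs ▸ Φ.cmin_le_Dnorm _
    have h2 : Φ.segN 0 1 ω ≤ Φ.K * Φ.segN 0 1 ω :=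
      le_mul_of_one_le_left (Φ.segN_pos _ _ _).le Φ.hK
    simpa using h1.trans h2
  | succ n ih =>
    obtain ⟨ω₁, i, _, h2⟩ := Φ.segN_succ (n + 1) ω
    calc ∏ k ∈ Finset.range (n + 2), Φ.cmin k
        = (∏ k ∈ Finset.range (n + 1), Φ.cmin k) * Φ.cmin (n + 1) :=
          Finset.prod_range_succ _ _
    _ ≤ (Φ.K ^ (n + 1) * Φ.segN 0 (n + 1) ω₁) * Φ.Dnorm (n + 1) i :=
      mul_le_mul (ih ω₁) (Φ.cmin_le_Dnorm i) (Φ.cmin_pos _).le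
        (mul_nonneg (by positivity) (Φ.segN_pos _ _ _).le)
    _ = Φ.K ^ (n + 1) * (Φ.segN 0 (n + 1) ω₁ * Φ.Dnorm (n + 1) i) := by ring
    _ ≤ Φ.K ^ (n + 1) * (Φ.K * Φ.segN 0 (n + 2) ω) := by
      exact mul_le_mul_of_nonneg_left h2 (by positivity)
    _ = Φ.K ^ (n + 2) * Φ.segN 0 (n + 2) ω := by ring

lemma card_word (n : ℕ) [∀ k, Finite (Φ.I k)] :
    Nat.card (Φ.Word 0 n) = ∏ k ∈ Finset.range n, Nat.card (Φ.I k) := by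
  haveI := fun k => Fintype.ofFinite (Φ.I k)
  rw [Nat.card_pi, Finset.range_eq_Ico]
  exact Finset.prod_coe_sort (Finset.Ico 0 n) (fun k => Nat.card (Φ.I k))

lemma Z_pos (n : ℕ) (t : ℝ) : 0 < Φ.Z n t := by
  obtain ⟨ω⟩ : Nonempty (Φ.Word 0 n) := inferInstance
  refine lt_of_lt_of_le ?_ (ENNReal.le_tsum ω)
  exact ENNReal.ofReal_pos.mpr (Real.rpow_pos_of_pos (Φ.segN_pos _ _ _) t)

lemma Z_lt_top (n : ℕ) (t : ℝ) [∀ k, Finite (Φ.I k)] : Φ.Z n t < ⊤ := by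
  haveI := fun k => Fintype.ofFinite (Φ.I k)
  rw [NCIFS.Z, tsum_fintype]
  exact ENNReal.sum_lt_top.mpr fun ω _ => ENNReal.ofReal_lt_top

lemma Z_le_ofReal (n : ℕ) (t : ℝ) (ht : 0 ≤ t) [∀ k, Finite (Φ.I k)] :
    Φ.Z n t ≤ ENNReal.ofReal ((∏ k ∈ Finset.range n, (Nat.card (Φ.I k) : ℝ)) *
      (∏ k ∈ Finset.range n, Φ.cmax k) ^ t) := by
  haveI := fun k => Fintype.ofFinite (Φ.I k)
  rw [NCIFS.Z, tsum_fintype]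
  calc ∑ ω : Φ.Word 0 n, ENNReal.ofReal (Φ.segN 0 n ω ^ t)
      ≤ ∑ _ω : Φ.Word 0 n, ENNReal.ofReal ((∏ k ∈ Finset.range n, Φ.cmax k) ^ t) :=
        Finset.sum_le_sum fun ω _ => ENNReal.ofReal_le_ofReal
          (Real.rpow_le_rpow (Φ.segN_pos _ _ _).le (Φ.segN_le_prod n ω) ht)
  _ = (Fintype.card (Φ.Word 0 n)) *
        ENNReal.ofReal ((∏ k ∈ Finset.range n, Φ.cmax k) ^ t) := by
      rw [Finset.sum_const, Finset.card_univ, nsmul_eq_mul]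
  _ = ENNReal.ofReal ((Fintype.card (Φ.Word 0 n) : ℝ) *
        (∏ k ∈ Finset.range n, Φ.cmax k) ^ t) := by
      rw [ENNReal.ofReal_mul (Nat.cast_nonneg _), ENNReal.ofReal_natCast]
  _ = _ := by
      rw [← Nat.card_eq_fintype_card, Φ.card_word n, Nat.cast_prod]

lemma ofReal_le_Z (n : ℕ) (t : ℝ) (ht : 0 ≤ t) [∀ k, Finite (Φ.I k)] :
    ENNReal.ofReal ((∏ k ∈ Finset.range (n + 1), (Nat.card (Φ.I k) : ℝ)) *
      ((∏ k ∈ Finset.range (n + 1), Φ.cmin k) / Φ.K ^ (n + 1)) ^ t)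
      ≤ Φ.Z (n + 1) t := by
  haveI := fun k => Fintype.ofFinite (Φ.I k)
  have hK0 : (0:ℝ) < Φ.K := lt_of_lt_of_le one_pos Φ.hK
  rw [NCIFS.Z, tsum_fintype]
  calc ENNReal.ofReal ((∏ k ∈ Finset.range (n + 1), (Nat.card (Φ.I k) : ℝ)) *
        ((∏ k ∈ Finset.range (n + 1), Φ.cmin k) / Φ.K ^ (n + 1)) ^ t)
      = (Fintype.card (Φ.Word 0 (n + 1))) *
        ENNReal.ofReal (((∏ k ∈ Finset.range (n + 1), Φ.cmin k) / Φ.K ^ (n + 1)) ^ t) := by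
        rw [ENNReal.ofReal_mul (Finset.prod_nonneg fun k _ => Nat.cast_nonneg _),
          ← Nat.cast_prod, ← Φ.card_word (n + 1), Nat.card_eq_fintype_card,
          ENNReal.ofReal_natCast]
  _ = ∑ _ω : Φ.Word 0 (n + 1),
        ENNReal.ofReal (((∏ k ∈ Finset.range (n + 1), Φ.cmin k) / Φ.K ^ (n + 1)) ^ t) := by
      rw [Finset.sum_const, Finset.card_univ, nsmul_eq_mul]
  _ ≤ ∑ ω : Φ.Word 0 (n + 1), ENNReal.ofReal (Φ.segN 0 (n + 1) ω ^ t) := by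
      refine Finset.sum_le_sum fun ω _ => ENNReal.ofReal_le_ofReal ?_
      refine Real.rpow_le_rpow
        (div_nonneg (Finset.prod_nonneg fun k _ => (Φ.cmin_pos k).le) (by positivity)) ?_ ht
      rw [div_le_iff₀ (by positivity)]
      calc ∏ k ∈ Finset.range (n + 1), Φ.cmin k
          ≤ Φ.K ^ (n + 1) * Φ.segN 0 (n + 1) ω := Φ.prod_le_segN n ω
      _ = Φ.segN 0 (n + 1) ω * Φ.K ^ (n + 1) := by ring

end NCIFS

/-- (Regular exponential growth.) Let `Φ` be a weakly balanced finite NCIFS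
such that `a = lim (1/n) log #I^{(n)}` and `b = lim (1/n) log(1/c̄_n)` exist, finite and
positive. Then `B(Φ) = a/b`: indeed `Z_n(t) → ∞` for `0 ≤ t < a/b` and `Z_n(t) → 0` for
`t > a/b`. -/
theorem NCIFS.bowen_dim_regular_growth {d : ℕ} (Φ : NCIFS d) [∀ n, Finite (Φ.I n)]
    (hbal : Tendsto (fun n : ℕ => Real.log (Φ.ρ n) / n) atTop (𝓝 0))
    (a b : ℝ) (ha : 0 < a) (hb : 0 < b)
    (hlima : Tendsto (fun n : ℕ => Real.log (Nat.card (Φ.I n)) / n) atTop (𝓝 a))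
    (hlimb : Tendsto (fun n : ℕ => Real.log (1 / Φ.cmax n) / n) atTop (𝓝 b)) :
    (∀ t : ℝ, 0 ≤ t → t < a / b → Tendsto (fun n => Φ.Z n t) atTop (𝓝 ⊤)) ∧
    (∀ t : ℝ, a / b < t → Tendsto (fun n => Φ.Z n t) atTop (𝓝 0)) ∧
    Φ.Bdim = ENNReal.ofReal (a / b) := by
  have hK0 : (0 : ℝ) < Φ.K := lt_of_lt_of_le one_pos Φ.hK
  have hab : 0 < a / b := div_pos ha hb
  have hcard : ∀ k, (0 : ℝ) < (Nat.card (Φ.I k) : ℝ) := fun k => by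
    haveI := Φ.hI_ne k
    exact_mod_cast Nat.card_pos
  -- limits of single-level quantities
  have hC : Tendsto (fun n : ℕ => Real.log (Φ.cmax n) / n) atTop (𝓝 (-b)) := by
    have h1 : (fun n : ℕ => Real.log (1 / Φ.cmax n) / n)
        = fun n : ℕ => -(Real.log (Φ.cmax n) / n) := by
      funext n
      rw [one_div, Real.log_inv, neg_div]
    rw [h1] at hlimb
    simpa using hlimb.neg
  have hCm : Tendsto (fun n : ℕ => Real.log (Φ.cmin n) / n) atTop (𝓝 (-b)) := by
    have h1 : (fun n : ℕ => Real.log (Φ.cmin n) / n)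
        = fun n : ℕ => Real.log (Φ.cmax n) / n - Real.log (Φ.ρ n) / n := by
      funext n
      rw [NCIFS.ρ, Real.log_div (Φ.cmax_pos n).ne' (Φ.cmin_pos n).ne']
      ring
    rw [h1]
    simpa using hC.sub hbal
  -- logs of the lower and upper bounds
  have hlogLo : ∀ (t : ℝ) (n : ℕ),
      Real.log ((∏ k ∈ Finset.range n, (Nat.card (Φ.I k) : ℝ)) *
        ((∏ k ∈ Finset.range n, Φ.cmin k) / Φ.K ^ n) ^ t)
      = ∑ k ∈ Finset.range n,
          (Real.log (Nat.card (Φ.I k)) + t * (Real.log (Φ.cmin k) - Real.log Φ.K)) := by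
    intro t n
    have hN : (0 : ℝ) < ∏ k ∈ Finset.range n, (Nat.card (Φ.I k) : ℝ) :=
      Finset.prod_pos fun k _ => hcard k
    have hPm : (0 : ℝ) < ∏ k ∈ Finset.range n, Φ.cmin k :=
      Finset.prod_pos fun k _ => Φ.cmin_pos k
    have hQ : (0 : ℝ) < (∏ k ∈ Finset.range n, Φ.cmin k) / Φ.K ^ n :=
      div_pos hPm (pow_pos hK0 n)
    rw [Real.log_mul hN.ne' (Real.rpow_pos_of_pos hQ t).ne', Real.log_rpow hQ,
      Real.log_div hPm.ne' (pow_pos hK0 n).ne', Real.log_pow,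
      Real.log_prod (fun k _ => (hcard k).ne'),
      Real.log_prod (fun k _ => (Φ.cmin_pos k).ne'),
      Finset.sum_add_distrib, ← Finset.mul_sum, Finset.sum_sub_distrib,
      Finset.sum_const, Finset.card_range, nsmul_eq_mul]
  have hlogHi : ∀ (t : ℝ) (n : ℕ),
      Real.log ((∏ k ∈ Finset.range n, (Nat.card (Φ.I k) : ℝ)) *
        (∏ k ∈ Finset.range n, Φ.cmax k) ^ t)
      = ∑ k ∈ Finset.range n,
          (Real.log (Nat.card (Φ.I k)) + t * Real.log (Φ.cmax k)) := by
    intro t n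
    have hN : (0 : ℝ) < ∏ k ∈ Finset.range n, (Nat.card (Φ.I k) : ℝ) :=
      Finset.prod_pos fun k _ => hcard k
    have hP : (0 : ℝ) < ∏ k ∈ Finset.range n, Φ.cmax k :=
      Finset.prod_pos fun k _ => Φ.cmax_pos k
    rw [Real.log_mul hN.ne' (Real.rpow_pos_of_pos hP t).ne', Real.log_rpow hP,
      Real.log_prod (fun k _ => (hcard k).ne'),
      Real.log_prod (fun k _ => (Φ.cmax_pos k).ne'),
      Finset.sum_add_distrib, ← Finset.mul_sum]
  -- positivity of the bounds
  have hLoPos : ∀ (t : ℝ) (n : ℕ),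
      0 < (∏ k ∈ Finset.range n, (Nat.card (Φ.I k) : ℝ)) *
        ((∏ k ∈ Finset.range n, Φ.cmin k) / Φ.K ^ n) ^ t := by
    intro t n
    have hPm : (0 : ℝ) < ∏ k ∈ Finset.range n, Φ.cmin k :=
      Finset.prod_pos fun k _ => Φ.cmin_pos k
    exact mul_pos (Finset.prod_pos fun k _ => hcard k)
      (Real.rpow_pos_of_pos (div_pos hPm (pow_pos hK0 n)) t)
  -- Cesàro limits
  have key_lo : ∀ t : ℝ, 0 ≤ t → t < a / b →
      Tendsto (fun n : ℕ => (∑ k ∈ Finset.range n,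
        (Real.log (Nat.card (Φ.I k)) + t * (Real.log (Φ.cmin k) - Real.log Φ.K))) / n)
        atTop atTop := by
    intro t ht htb
    have h2 : Tendsto (fun k : ℕ => Real.log Φ.K / k) atTop (𝓝 0) :=
      tendsto_const_div_atTop_nhds_zero_nat _
    have h3 := hlima.add ((hCm.sub h2).const_mul t)
    have he : (fun k : ℕ => Real.log (Nat.card (Φ.I k)) / k
        + t * (Real.log (Φ.cmin k) / k - Real.log Φ.K / k))
        = fun k : ℕ =>
          (Real.log (Nat.card (Φ.I k)) + t * (Real.log (Φ.cmin k) - Real.log Φ.K)) / k := by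
      funext k; ring
    rw [he] at h3
    have hval : a + t * (-b - 0) = a - t * b := by ring
    rw [hval] at h3
    have hpos : 0 < a - t * b := by
      have := (lt_div_iff₀ hb).mp htb
      linarith
    exact aux_cesaro_div_atTop hpos h3
  have key_hi : ∀ t : ℝ, a / b < t →
      Tendsto (fun n : ℕ => (∑ k ∈ Finset.range n,
        (Real.log (Nat.card (Φ.I k)) + t * Real.log (Φ.cmax k))) / n)
        atTop atBot := by
    intro t htb
    have h3 := hlima.add (hC.const_mul t)
    have he : (fun k : ℕ => Real.log (Nat.card (Φ.I k)) / k + t * (Real.log (Φ.cmax k) / k))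
        = fun k : ℕ => (Real.log (Nat.card (Φ.I k)) + t * Real.log (Φ.cmax k)) / k := by
      funext k; ring
    rw [he] at h3
    have hval : a + t * (-b) = a - t * b := by ring
    rw [hval] at h3
    have hneg : a - t * b < 0 := by
      have := (div_lt_iff₀ hb).mp htb
      linarith
    exact aux_cesaro_div_atBot hneg h3
  -- bounds on Z
  have hZhi : ∀ (t : ℝ), 0 ≤ t → ∀ n : ℕ, Φ.Z n t ≤
      ENNReal.ofReal ((∏ k ∈ Finset.range n, (Nat.card (Φ.I k) : ℝ)) *
        (∏ k ∈ Finset.range n, Φ.cmax k) ^ t) := fun t ht n => Φ.Z_le_ofReal n t ht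
  have hZlo : ∀ (t : ℝ), 0 ≤ t → ∀ n : ℕ, 1 ≤ n →
      ENNReal.ofReal ((∏ k ∈ Finset.range n, (Nat.card (Φ.I k) : ℝ)) *
        ((∏ k ∈ Finset.range n, Φ.cmin k) / Φ.K ^ n) ^ t) ≤ Φ.Z n t := by
    intro t ht n hn
    obtain ⟨m, rfl⟩ : ∃ m, n = m + 1 := ⟨n - 1, by omega⟩
    exact Φ.ofReal_le_Z m t ht
  -- Part 1 : divergence below a/b
  have part1 : ∀ t : ℝ, 0 ≤ t → t < a / b → Tendsto (fun n => Φ.Z n t) atTop (𝓝 ⊤) := by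
    intro t ht htb
    have hsum := aux_tendsto_atTop_of_div_atTop (key_lo t ht htb)
    have hLo : Tendsto (fun n : ℕ => (∏ k ∈ Finset.range n, (Nat.card (Φ.I k) : ℝ)) *
        ((∏ k ∈ Finset.range n, Φ.cmin k) / Φ.K ^ n) ^ t) atTop atTop := by
      have he : (fun n : ℕ => (∏ k ∈ Finset.range n, (Nat.card (Φ.I k) : ℝ)) *
          ((∏ k ∈ Finset.range n, Φ.cmin k) / Φ.K ^ n) ^ t)
          = fun n : ℕ => Real.exp (∑ k ∈ Finset.range n,
            (Real.log (Nat.card (Φ.I k)) + t * (Real.log (Φ.cmin k) - Real.log Φ.K))) := by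
        funext n
        rw [← hlogLo t n, Real.exp_log (hLoPos t n)]
      rw [he]
      exact Real.tendsto_exp_atTop.comp hsum
    have h1 : Tendsto (fun n : ℕ => ENNReal.ofReal
        ((∏ k ∈ Finset.range n, (Nat.card (Φ.I k) : ℝ)) *
          ((∏ k ∈ Finset.range n, Φ.cmin k) / Φ.K ^ n) ^ t)) atTop (𝓝 ⊤) :=
      ENNReal.tendsto_ofReal_atTop.comp hLo
    refine tendsto_nhds_top_mono h1 ?_
    filter_upwards [eventually_ge_atTop 1] with n hn
    exact hZlo t ht n hn
  -- Part 2 : convergence to zero above a/b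
  have part2 : ∀ t : ℝ, a / b < t → Tendsto (fun n => Φ.Z n t) atTop (𝓝 0) := by
    intro t htb
    have ht : 0 ≤ t := (hab.trans htb).le
    have hsum := aux_tendsto_atBot_of_div_atBot (key_hi t htb)
    have hHi : Tendsto (fun n : ℕ => (∏ k ∈ Finset.range n, (Nat.card (Φ.I k) : ℝ)) *
        (∏ k ∈ Finset.range n, Φ.cmax k) ^ t) atTop (𝓝 0) := by
      have he : (fun n : ℕ => (∏ k ∈ Finset.range n, (Nat.card (Φ.I k) : ℝ)) *
          (∏ k ∈ Finset.range n, Φ.cmax k) ^ t)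
          = fun n : ℕ => Real.exp (∑ k ∈ Finset.range n,
            (Real.log (Nat.card (Φ.I k)) + t * Real.log (Φ.cmax k))) := by
        funext n
        rw [← hlogHi t n, Real.exp_log]
        exact mul_pos (Finset.prod_pos fun k _ => hcard k)
          (Real.rpow_pos_of_pos (Finset.prod_pos fun k _ => Φ.cmax_pos k) t)
      rw [he]
      exact Real.tendsto_exp_atBot.comp hsum
    have h1 : Tendsto (fun n : ℕ => ENNReal.ofReal
        ((∏ k ∈ Finset.range n, (Nat.card (Φ.I k) : ℝ)) *
          (∏ k ∈ Finset.range n, Φ.cmax k) ^ t)) atTop (𝓝 0) := by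
      have := ENNReal.tendsto_ofReal hHi
      rwa [ENNReal.ofReal_zero] at this
    exact tendsto_of_tendsto_of_tendsto_of_le_of_le' tendsto_const_nhds h1
      (Eventually.of_forall fun n => zero_le)
      (Eventually.of_forall fun n => hZhi t ht n)
  -- lowP computations
  have hv : ∀ (t : ℝ) (n : ℕ), (Φ.Z n t).log * (((n : ℝ)⁻¹ : ℝ) : EReal)
      = ((Real.log ((Φ.Z n t).toReal) * (n : ℝ)⁻¹ : ℝ) : EReal) := by
    intro t n
    rw [ENNReal.log_pos_real'
      (ENNReal.toReal_pos (Φ.Z_pos n t).ne' (Φ.Z_lt_top n t).ne), EReal.coe_mul]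
  have hlow_top : ∀ t : ℝ, 0 ≤ t → t < a / b → Φ.lowP t = ⊤ := by
    intro t ht htb
    have hvt : Tendsto (fun n : ℕ => Real.log ((Φ.Z n t).toReal) * (n : ℝ)⁻¹) atTop atTop := by
      refine tendsto_atTop_mono' atTop ?_ (key_lo t ht htb)
      filter_upwards [eventually_ge_atTop 1] with n hn
      have hle := hZlo t ht n hn
      have hle2 : (∏ k ∈ Finset.range n, (Nat.card (Φ.I k) : ℝ)) *
          ((∏ k ∈ Finset.range n, Φ.cmin k) / Φ.K ^ n) ^ t ≤ (Φ.Z n t).toReal :=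
        (ENNReal.ofReal_le_iff_le_toReal (Φ.Z_lt_top n t).ne).mp hle
      have hlog := Real.log_le_log (hLoPos t n) hle2
      rw [hlogLo t n] at hlog
      rw [div_eq_mul_inv]
      exact mul_le_mul_of_nonneg_right hlog (by positivity)
    have hu : Tendsto (fun n : ℕ => (Φ.Z n t).log * (((n : ℝ)⁻¹ : ℝ) : EReal))
        atTop (𝓝 ⊤) := by
      rw [EReal.tendsto_nhds_top_iff_real]
      intro x
      filter_upwards [hvt.eventually_gt_atTop x] with n hn
      rw [hv t n]
      exact_mod_cast hn
    exact hu.liminf_eq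
  have hlow_bot : ∀ t : ℝ, a / b < t → Φ.lowP t = ⊥ := by
    intro t htb
    have ht : 0 ≤ t := (hab.trans htb).le
    have hvt : Tendsto (fun n : ℕ => Real.log ((Φ.Z n t).toReal) * (n : ℝ)⁻¹) atTop atBot := by
      refine tendsto_atBot_mono' atTop ?_ (key_hi t htb)
      filter_upwards [] with n
      have hle := hZhi t ht n
      have hHiNonneg : (0:ℝ) ≤ (∏ k ∈ Finset.range n, (Nat.card (Φ.I k) : ℝ)) *
          (∏ k ∈ Finset.range n, Φ.cmax k) ^ t :=
        mul_nonneg (Finset.prod_nonneg fun k _ => (hcard k).le)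
          (Real.rpow_nonneg (Finset.prod_nonneg fun k _ => (Φ.cmax_pos k).le) t)
      have hle2 : (Φ.Z n t).toReal ≤ (∏ k ∈ Finset.range n, (Nat.card (Φ.I k) : ℝ)) *
          (∏ k ∈ Finset.range n, Φ.cmax k) ^ t :=
        ENNReal.toReal_le_of_le_ofReal hHiNonneg hle
      have hZpos : 0 < (Φ.Z n t).toReal :=
        ENNReal.toReal_pos (Φ.Z_pos n t).ne' (Φ.Z_lt_top n t).ne
      have hlog := Real.log_le_log hZpos hle2
      rw [hlogHi t n] at hlog
      rw [div_eq_mul_inv]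
      exact mul_le_mul_of_nonneg_right hlog (by positivity)
    have hu : Tendsto (fun n : ℕ => (Φ.Z n t).log * (((n : ℝ)⁻¹ : ℝ) : EReal))
        atTop (𝓝 ⊥) := by
      rw [EReal.tendsto_nhds_bot_iff_real]
      intro x
      filter_upwards [hvt.eventually_lt_atBot x] with n hn
      rw [hv t n]
      exact_mod_cast hn
    exact hu.liminf_eq
  refine ⟨part1, part2, ?_⟩
  rw [NCIFS.Bdim]
  apply le_antisymm
  · apply iSup_le
    rintro ⟨t, ht0, htpos⟩
    refine ENNReal.ofReal_le_ofReal ?_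
    by_contra hlt
    push_neg at hlt
    rw [hlow_bot t hlt] at htpos
    exact not_lt_bot htpos
  · refine le_of_forall_lt fun c hc => ?_
    have hc_top : c ≠ ⊤ := hc.ne_top
    have hcr : c.toReal < a / b := (ENNReal.lt_ofReal_iff_toReal_lt hc_top).mp hc
    have h1 : 0 ≤ max c.toReal 0 := le_max_right _ _
    have hmax : max c.toReal 0 < a / b := max_lt hcr hab
    have hs0 : 0 ≤ (max c.toReal 0 + a / b) / 2 := by linarith
    have hs1 : (max c.toReal 0 + a / b) / 2 < a / b := by linarith
    have hs2 : c.toReal < (max c.toReal 0 + a / b) / 2 := by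
      have := le_max_left c.toReal 0
      linarith
    have hcs : c < ENNReal.ofReal ((max c.toReal 0 + a / b) / 2) :=
      (ENNReal.lt_ofReal_iff_toReal_lt hc_top).mpr hs2
    refine hcs.trans_le ?_
    have hmem : (0 : EReal) < Φ.lowP ((max c.toReal 0 + a / b) / 2) := by
      rw [hlow_top _ hs0 hs1]
      exact lt_of_lt_of_le zero_lt_one le_top
    exact le_iSup (fun (x : {t : ℝ // 0 ≤ t ∧ (0 : EReal) < Φ.lowP t}) =>
      ENNReal.ofReal x.1) ⟨_, hs0, hmem⟩
end
end

section
/- Let Φ be a finite NCIFS, t₀ > 0, and let (α_n) be any sequence with α_n ≥ 1 and α_n → ∞. Then there exists a subsystem Φ_f with index sets I_f^(n) ⊂ I^(n) such that P̲^{Φ_f}(t) = P̲^Φ(t) for all t ≥ t₀, and such that max_{a,b ∈ I_f^(n)} ‖Dφ_a^(n)‖/‖Dφ_b^(n)‖ ≤ α_n·(#I^(n))^{1/t₀} for all n. -/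
open Metric Set Filter Topology MeasureTheory
open scoped ENNReal

noncomputable section

/-- The partition function of the subsystem of `Φ` determined by sub-alphabets `If n ⊆ I^{(n)}`. -/
def NCIFS.Zsub {d : ℕ} (Φ : NCIFS d) (If : ∀ n, Set (Φ.I n)) (n : ℕ) (t : ℝ) : ℝ≥0∞ :=
  ∑' ω : (j : Finset.Ico 0 n) → (If j : Set (Φ.I j)),
    ENNReal.ofReal (Φ.segN 0 n (fun j => (ω j : Φ.I j)) ^ t)
namespace NCIFS

variable {d : ℕ} (Φ : NCIFS d)

lemma Dnorm_pos (n : ℕ) (i : Φ.I n) : 0 < Φ.Dnorm n i := Φ.segN_pos _ _ _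

lemma segN_single {j : ℕ} (ω : Φ.Word j (j+1)) (hj : j ∈ Finset.Ico j (j+1)) :
    Φ.segN j (j+1) ω = Φ.Dnorm j (ω ⟨j, hj⟩) := by
  unfold Dnorm
  congr 1
  funext p
  obtain ⟨p, hp⟩ := p
  have hpj : j = p := by
    have := Finset.mem_Ico.mp hp; omega
  subst hpj
  rfl

lemma segN_one_change {m n j : ℕ} (hj : j ∈ Finset.Ico m n) (ω τ : Φ.Word m n)
    (hagree : ∀ p : Finset.Ico m n, (p : ℕ) ≠ j → ω p = τ p) :
    Φ.segN m n ω ≤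
      Φ.K ^ 2 * (Φ.Dnorm j (ω ⟨j, hj⟩) / Φ.Dnorm j (τ ⟨j, hj⟩)) * Φ.segN m n τ := by
  obtain ⟨hmj, hjn⟩ := Finset.mem_Ico.mp hj
  have hjn' : j + 1 ≤ n := hjn
  have memL : ∀ p : ℕ, p ∈ Finset.Ico m j → p ∈ Finset.Ico m n := by
    intro p hp; have := Finset.mem_Ico.mp hp; exact Finset.mem_Ico.mpr ⟨this.1, by omega⟩
  have memR : ∀ p : ℕ, p ∈ Finset.Ico j n → p ∈ Finset.Ico m n := by
    intro p hp; have := Finset.mem_Ico.mp hp; exact Finset.mem_Ico.mpr ⟨by omega, this.2⟩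
  have memM : ∀ p : ℕ, p ∈ Finset.Ico j (j+1) → p ∈ Finset.Ico j n := by
    intro p hp; have := Finset.mem_Ico.mp hp; exact Finset.mem_Ico.mpr ⟨this.1, by omega⟩
  have memB : ∀ p : ℕ, p ∈ Finset.Ico (j+1) n → p ∈ Finset.Ico j n := by
    intro p hp; have := Finset.mem_Ico.mp hp; exact Finset.mem_Ico.mpr ⟨by omega, this.2⟩
  set ωL : Φ.Word m j := fun p => ω ⟨p.1, memL p.1 p.2⟩ with hωL
  set ωR : Φ.Word j n := fun p => ω ⟨p.1, memR p.1 p.2⟩ with hωR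
  set ωM : Φ.Word j (j+1) := fun p => ω ⟨p.1, memR p.1 (memM p.1 p.2)⟩ with hωM
  set ωB : Φ.Word (j+1) n := fun p => ω ⟨p.1, memR p.1 (memB p.1 p.2)⟩ with hωB
  set τL : Φ.Word m j := fun p => τ ⟨p.1, memL p.1 p.2⟩ with hτL
  set τR : Φ.Word j n := fun p => τ ⟨p.1, memR p.1 p.2⟩ with hτR
  set τM : Φ.Word j (j+1) := fun p => τ ⟨p.1, memR p.1 (memM p.1 p.2)⟩ with hτM
  set τB : Φ.Word (j+1) n := fun p => τ ⟨p.1, memR p.1 (memB p.1 p.2)⟩ with hτB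
  have h1 : Φ.segN m n ω ≤ Φ.segN m j ωL * Φ.segN j n ωR :=
    (Φ.segN_split m j n hmj (by omega) ω ωL ωR (fun p h₁ h₂ => rfl) (fun p h₁ h₂ => rfl)).1
  have h2 : Φ.segN j n ωR ≤ Φ.segN j (j+1) ωM * Φ.segN (j+1) n ωB :=
    (Φ.segN_split j (j+1) n (by omega) hjn' ωR ωM ωB (fun p h₁ h₂ => rfl)
      (fun p h₁ h₂ => rfl)).1
  have h3 : Φ.segN m j τL * Φ.segN j n τR ≤ Φ.K * Φ.segN m n τ :=
    (Φ.segN_split m j n hmj (by omega) τ τL τR (fun p h₁ h₂ => rfl) (fun p h₁ h₂ => rfl)).2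
  have h4 : Φ.segN j (j+1) τM * Φ.segN (j+1) n τB ≤ Φ.K * Φ.segN j n τR :=
    (Φ.segN_split j (j+1) n (by omega) hjn' τR τM τB (fun p h₁ h₂ => rfl)
      (fun p h₁ h₂ => rfl)).2
  have hLeq : ωL = τL := by
    funext p
    exact hagree ⟨p.1, memL p.1 p.2⟩
      (show (p : ℕ) ≠ j by have := Finset.mem_Ico.mp p.2; omega)
  have hBeq : ωB = τB := by
    funext p
    exact hagree ⟨p.1, memR p.1 (memB p.1 p.2)⟩
      (show (p : ℕ) ≠ j by have := Finset.mem_Ico.mp p.2; omega)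
  have hjmem : j ∈ Finset.Ico j (j+1) := Finset.mem_Ico.mpr ⟨le_refl _, by omega⟩
  have hMa : Φ.segN j (j+1) ωM = Φ.Dnorm j (ω ⟨j, hj⟩) := Φ.segN_single ωM hjmem
  have hMb : Φ.segN j (j+1) τM = Φ.Dnorm j (τ ⟨j, hj⟩) := Φ.segN_single τM hjmem
  set a := Φ.Dnorm j (ω ⟨j, hj⟩) with ha
  set b := Φ.Dnorm j (τ ⟨j, hj⟩) with hb
  have hapos : 0 < a := Φ.Dnorm_pos _ _
  have hbpos : 0 < b := Φ.Dnorm_pos _ _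
  have hKpos : 0 < Φ.K := lt_of_lt_of_le one_pos Φ.hK
  have hτLpos : 0 < Φ.segN m j τL := Φ.segN_pos _ _ _
  have hτBpos : 0 < Φ.segN (j+1) n τB := Φ.segN_pos _ _ _
  have hSpos : 0 < Φ.segN m n τ := Φ.segN_pos _ _ _
  rw [hLeq] at h1
  rw [hMa, hBeq] at h2
  rw [hMb] at h4
  -- h1 : segN ω ≤ segN τL * segN ωR ; h2 : segN ωR ≤ a * segN τB
  have h5 : Φ.segN m n ω ≤ Φ.segN m j τL * (a * Φ.segN (j+1) n τB) :=
    h1.trans (mul_le_mul_of_nonneg_left h2 hτLpos.le)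
  have h6 : Φ.segN m j τL * (b * Φ.segN (j+1) n τB) ≤ Φ.K * (Φ.K * Φ.segN m n τ) := by
    calc Φ.segN m j τL * (b * Φ.segN (j+1) n τB)
        ≤ Φ.segN m j τL * (Φ.K * Φ.segN j n τR) := mul_le_mul_of_nonneg_left h4 hτLpos.le
      _ = Φ.K * (Φ.segN m j τL * Φ.segN j n τR) := by ring
      _ ≤ Φ.K * (Φ.K * Φ.segN m n τ) := mul_le_mul_of_nonneg_left h3 hKpos.le
  have heq : Φ.segN m j τL * (a * Φ.segN (j+1) n τB)
      = (a / b) * (Φ.segN m j τL * (b * Φ.segN (j+1) n τB)) := by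
    field_simp
  calc Φ.segN m n ω ≤ Φ.segN m j τL * (a * Φ.segN (j+1) n τB) := h5
    _ = (a / b) * (Φ.segN m j τL * (b * Φ.segN (j+1) n τB)) := heq
    _ ≤ (a / b) * (Φ.K * (Φ.K * Φ.segN m n τ)) :=
        mul_le_mul_of_nonneg_left h6 (div_nonneg hapos.le hbpos.le)
    _ = Φ.K ^ 2 * (a / b) * Φ.segN m n τ := by ring

lemma segN_multi_change {n : ℕ} (c : ℕ → ℝ) (D : Finset ℕ) :
    D ⊆ Finset.Ico 0 n → ∀ ω τ : Φ.Word 0 n,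
    (∀ (j : ℕ) (h : j ∈ Finset.Ico 0 n), j ∉ D → ω ⟨j, h⟩ = τ ⟨j, h⟩) →
    (∀ (j : ℕ) (h : j ∈ Finset.Ico 0 n), j ∈ D →
       Φ.K ^ 2 * (Φ.Dnorm j (ω ⟨j, h⟩) / Φ.Dnorm j (τ ⟨j, h⟩)) ≤ c j) →
    Φ.segN 0 n ω ≤ (∏ j ∈ D, c j) * Φ.segN 0 n τ := by
  classical
  induction D using Finset.induction_on with
  | empty =>
    intro _ ω τ hagree _
    have : ω = τ := funext fun p => hagree p.1 p.2 (Finset.notMem_empty _)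
    rw [this, Finset.prod_empty, one_mul]
  | @insert i S hiS ih =>
    intro hsub ω τ hagree hbound
    have hiIco : i ∈ Finset.Ico 0 n := hsub (Finset.mem_insert_self i S)
    set σ : Φ.Word 0 n := fun p => if (p : ℕ) = i then τ p else ω p with hσ
    have hσi : σ ⟨i, hiIco⟩ = τ ⟨i, hiIco⟩ := by simp [hσ]
    have h1 : Φ.segN 0 n ω ≤
        Φ.K ^ 2 * (Φ.Dnorm i (ω ⟨i, hiIco⟩) / Φ.Dnorm i (σ ⟨i, hiIco⟩)) * Φ.segN 0 n σ :=
      Φ.segN_one_change hiIco ω σ (fun p hp => by simp [hσ, hp])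
    rw [hσi] at h1
    have hci : Φ.K ^ 2 * (Φ.Dnorm i (ω ⟨i, hiIco⟩) / Φ.Dnorm i (τ ⟨i, hiIco⟩)) ≤ c i :=
      hbound i hiIco (Finset.mem_insert_self i S)
    have h2 : Φ.segN 0 n σ ≤ (∏ j ∈ S, c j) * Φ.segN 0 n τ := by
      apply ih (fun j hj => hsub (Finset.mem_insert_of_mem hj)) σ τ
      · intro j h hjS
        by_cases hji : j = i
        · subst hji; simp [hσ]
        · have : σ ⟨j, h⟩ = ω ⟨j, h⟩ := by simp [hσ, hji]
          rw [this]
          exact hagree j h (by simp [Finset.mem_insert, hji, hjS])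
      · intro j h hjS
        have hji : j ≠ i := fun hji => hiS (hji ▸ hjS)
        have : σ ⟨j, h⟩ = ω ⟨j, h⟩ := by simp [hσ, hji]
        rw [this]
        exact hbound j h (Finset.mem_insert_of_mem hjS)
    have hXnn : 0 ≤ Φ.K ^ 2 * (Φ.Dnorm i (ω ⟨i, hiIco⟩) / Φ.Dnorm i (τ ⟨i, hiIco⟩)) := by
      have := Φ.Dnorm_pos i (ω ⟨i, hiIco⟩)
      have := Φ.Dnorm_pos i (τ ⟨i, hiIco⟩)
      positivity
    have hSτnn : 0 ≤ (∏ j ∈ S, c j) * Φ.segN 0 n τ := by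
      have hc : ∀ j ∈ S, 0 < c j := fun j hj => by
        have h := hbound j (hsub (Finset.mem_insert_of_mem hj)) (Finset.mem_insert_of_mem hj)
        have h1 := Φ.Dnorm_pos j (ω ⟨j, hsub (Finset.mem_insert_of_mem hj)⟩)
        have h2 := Φ.Dnorm_pos j (τ ⟨j, hsub (Finset.mem_insert_of_mem hj)⟩)
        have hKpos : (0:ℝ) < Φ.K := lt_of_lt_of_le one_pos Φ.hK
        calc (0:ℝ) < Φ.K ^ 2 * (Φ.Dnorm j (ω ⟨j, _⟩) / Φ.Dnorm j (τ ⟨j, _⟩)) := by positivity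
          _ ≤ c j := h
      have := Finset.prod_pos hc
      have := Φ.segN_pos 0 n τ
      positivity
    calc Φ.segN 0 n ω
        ≤ Φ.K ^ 2 * (Φ.Dnorm i (ω ⟨i, hiIco⟩) / Φ.Dnorm i (τ ⟨i, hiIco⟩)) * Φ.segN 0 n σ := h1
      _ ≤ Φ.K ^ 2 * (Φ.Dnorm i (ω ⟨i, hiIco⟩) / Φ.Dnorm i (τ ⟨i, hiIco⟩)) *
            ((∏ j ∈ S, c j) * Φ.segN 0 n τ) := mul_le_mul_of_nonneg_left h2 hXnn
      _ ≤ c i * ((∏ j ∈ S, c j) * Φ.segN 0 n τ) := mul_le_mul_of_nonneg_right hci hSτnn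
      _ = (∏ j ∈ insert i S, c j) * Φ.segN 0 n τ := by rw [Finset.prod_insert hiS]; ring

end NCIFS

/-- (Balance from growth restrictions.) Let `Φ` be a finite NCIFS, `t₀ > 0`,
and `(α_n)` any sequence with `α_n ≥ 1`, `α_n → ∞`. Then there is a subsystem `Φ_f`, given by
index sets `I_f^{(n)} ⊆ I^{(n)}`, with `P̲^{Φ_f}(t) = P̲^Φ(t)` for all `t ≥ t₀` and
`‖Dφ_a^{(n)}‖/‖Dφ_b^{(n)}‖ ≤ α_n·(#I^{(n)})^{1/t₀}` for all `a, b ∈ I_f^{(n)}` and all `n`. -/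
theorem NCIFS.balanced_subsystem {d : ℕ} (Φ : NCIFS d) [∀ n, Finite (Φ.I n)]
    (t₀ : ℝ) (ht₀ : 0 < t₀) (α : ℕ → ℝ) (hα1 : ∀ n, 1 ≤ α n)
    (hα : Tendsto α atTop atTop) :
    ∃ If : ∀ n, Set (Φ.I n), (∀ n, (If n).Nonempty) ∧
      (∀ t : ℝ, t₀ ≤ t →
        liminf (fun n : ℕ => (Φ.Zsub If n t).log * (((n : ℝ)⁻¹ : ℝ) : EReal)) atTop =
          Φ.lowP t) ∧
      (∀ n, ∀ a ∈ If n, ∀ b ∈ If n,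
        Φ.Dnorm n a / Φ.Dnorm n b ≤ α n * (Nat.card (Φ.I n) : ℝ) ^ (1 / t₀)) := by
  classical
  have hKpos : (0:ℝ) < Φ.K := lt_of_lt_of_le one_pos Φ.hK
  have hMex : ∀ n, ∃ a : Φ.I n, ∀ b, Φ.Dnorm n b ≤ Φ.Dnorm n a := fun n => by
    haveI := Φ.hI_ne n
    exact Finite.exists_max (Φ.Dnorm n)
  choose M hM using hMex
  have hcard1 : ∀ n, (1:ℝ) ≤ (Nat.card (Φ.I n) : ℝ) := fun n => by
    haveI := Φ.hI_ne n
    have h : 0 < Nat.card (Φ.I n) := Nat.card_pos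
    exact_mod_cast h
  set γ : ℕ → ℝ := fun n => α n * (Nat.card (Φ.I n) : ℝ) ^ (1 / t₀) with hγdef
  have hγ1 : ∀ n, 1 ≤ γ n := by
    intro n
    have h1 : (1:ℝ) ≤ (Nat.card (Φ.I n) : ℝ) ^ (1 / t₀) := by
      have := Real.rpow_le_rpow (by norm_num) (hcard1 n) (by positivity : (0:ℝ) ≤ 1 / t₀)
      rwa [Real.one_rpow] at this
    calc (1:ℝ) = 1 * 1 := by ring
      _ ≤ α n * (Nat.card (Φ.I n) : ℝ) ^ (1 / t₀) :=
        mul_le_mul (hα1 n) h1 (by norm_num) (by linarith [hα1 n])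
  have hγpos : ∀ n, 0 < γ n := fun n => lt_of_lt_of_le one_pos (hγ1 n)
  set θ : ℕ → ℝ := fun n => Φ.Dnorm n (M n) * (γ n)⁻¹ with hθdef
  have hθpos : ∀ n, 0 < θ n := fun n => mul_pos (Φ.Dnorm_pos _ _) (inv_pos.mpr (hγpos n))
  set If : ∀ n, Set (Φ.I n) := fun n => {a | θ n ≤ Φ.Dnorm n a} with hIfdef
  have hMmem : ∀ n, M n ∈ If n := by
    intro n
    show θ n ≤ Φ.Dnorm n (M n)
    have h1 : (γ n)⁻¹ ≤ 1 := inv_le_one_of_one_le₀ (hγ1 n)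
    have h2 := Φ.Dnorm_pos n (M n)
    calc θ n = Φ.Dnorm n (M n) * (γ n)⁻¹ := rfl
      _ ≤ Φ.Dnorm n (M n) * 1 := mul_le_mul_of_nonneg_left h1 h2.le
      _ = Φ.Dnorm n (M n) := mul_one _
  refine ⟨If, fun n => ⟨M n, hMmem n⟩, ?_, ?_⟩
  swap
  · -- ratio bound
    intro n a ha b hb
    have hDb : θ n ≤ Φ.Dnorm n b := hb
    have h1 : Φ.Dnorm n a / Φ.Dnorm n b ≤ Φ.Dnorm n (M n) / θ n :=
      div_le_div₀ (Φ.Dnorm_pos n (M n)).le (hM n a) (hθpos n) hDb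
    have h2 : Φ.Dnorm n (M n) / θ n = γ n := by
      have hD0 : Φ.Dnorm n (M n) ≠ 0 := (Φ.Dnorm_pos n (M n)).ne'
      have hγ0 : γ n ≠ 0 := (hγpos n).ne'
      rw [hθdef]
      field_simp
    rw [h2] at h1
    exact h1
  -- pressure equality
  intro t ht
  have htpos : 0 < t := lt_of_lt_of_le ht₀ ht
  set δ : ℕ → ℝ := fun j => (Φ.K ^ 2) ^ t * (α j) ^ (-t₀) with hδdef
  have hαpos : ∀ j, (0:ℝ) < α j := fun j => lt_of_lt_of_le one_pos (hα1 j)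
  have hδnn : ∀ j, 0 ≤ δ j :=
    fun j => mul_nonneg (Real.rpow_nonneg (by positivity) _) (Real.rpow_nonneg (hαpos j).le _)
  set c : ℕ → ℝ := fun j => Φ.K ^ 2 * (γ j)⁻¹ with hcdef
  have hcpos : ∀ j, 0 < c j := fun j => mul_pos (by positivity) (inv_pos.mpr (hγpos j))
  letI : ∀ j : ℕ, Fintype (Φ.I j) := fun j => Fintype.ofFinite _
  -- the key estimate
  have key : ∀ n : ℕ, Φ.Z n t ≤
      Φ.Zsub If n t * ENNReal.ofReal (∏ j ∈ Finset.range n, (1 + δ j)) := by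
    intro n
    set Ψ : Φ.Word 0 n → ((j : Finset.Ico 0 n) → (If (j:ℕ) : Set (Φ.I (j:ℕ)))) := fun ω j =>
      if h : ω j ∈ If (j:ℕ) then ⟨ω j, h⟩ else ⟨M (j:ℕ), hMmem (j:ℕ)⟩ with hΨ
    set o : Φ.Word 0 n → ((j : Finset.Ico 0 n) → Option {b : Φ.I (j:ℕ) // b ∉ If (j:ℕ)}) :=
      fun ω j => if h : ω j ∈ If (j:ℕ) then none else some ⟨ω j, h⟩ with ho
    set w : (p : Finset.Ico 0 n) → Option {b : Φ.I (p:ℕ) // b ∉ If (p:ℕ)} → ℝ≥0∞ := fun p b =>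
      Option.rec 1 (fun _ => ENNReal.ofReal (c (p:ℕ) ^ t)) b with hw
    have hterm : ∀ ω : Φ.Word 0 n,
        ENNReal.ofReal (Φ.segN 0 n ω ^ t) ≤
          ENNReal.ofReal (Φ.segN 0 n (fun j => ((Ψ ω j : Φ.I (j:ℕ)))) ^ t) *
            ∏ p : Finset.Ico 0 n, w p (o ω p) := by
      intro ω
      set τ : Φ.Word 0 n := fun j => ((Ψ ω j : Φ.I (j:ℕ))) with hτ
      set D : Finset ℕ :=
        (Finset.univ.filter (fun p : Finset.Ico 0 n => ω p ∉ If (p:ℕ))).image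
          Subtype.val with hDdef
      have hDsub : D ⊆ Finset.Ico 0 n := by
        intro j hj
        rw [hDdef] at hj
        obtain ⟨p, -, rfl⟩ := Finset.mem_image.mp hj
        exact p.2
      have hDmem : ∀ (j:ℕ) (h : j ∈ Finset.Ico 0 n), j ∈ D ↔ ω ⟨j, h⟩ ∉ If j := by
        intro j h
        rw [hDdef]
        constructor
        · intro hj
          obtain ⟨p, hp, hpj⟩ := Finset.mem_image.mp hj
          have hp' := (Finset.mem_filter.mp hp).2
          have hpe : p = ⟨j, h⟩ := Subtype.ext hpj
          rwa [hpe] at hp'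
        · intro hω
          exact Finset.mem_image.mpr
            ⟨⟨j, h⟩, Finset.mem_filter.mpr ⟨Finset.mem_univ _, hω⟩, rfl⟩
      have hmc : Φ.segN 0 n ω ≤ (∏ j ∈ D, c j) * Φ.segN 0 n τ := by
        apply Φ.segN_multi_change c D hDsub ω τ
        · intro j h hjD
          have hmem : ω ⟨j, h⟩ ∈ If j := not_not.mp (fun hn => hjD ((hDmem j h).mpr hn))
          simp [hτ, hΨ, hmem]
        · intro j h hjD
          have hnmem : ω ⟨j, h⟩ ∉ If j := (hDmem j h).mp hjD
          have hτj : τ ⟨j, h⟩ = M j := by simp [hτ, hΨ, hnmem]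
          rw [hτj]
          have hlt : Φ.Dnorm j (ω ⟨j, h⟩) ≤ θ j := (not_le.mp hnmem).le
          have hratio : Φ.Dnorm j (ω ⟨j, h⟩) / Φ.Dnorm j (M j) ≤ (γ j)⁻¹ := by
            rw [div_le_iff₀ (Φ.Dnorm_pos j (M j))]
            calc Φ.Dnorm j (ω ⟨j, h⟩) ≤ θ j := hlt
              _ = (γ j)⁻¹ * Φ.Dnorm j (M j) := mul_comm _ _
          calc Φ.K ^ 2 * (Φ.Dnorm j (ω ⟨j, h⟩) / Φ.Dnorm j (M j))
              ≤ Φ.K ^ 2 * (γ j)⁻¹ := mul_le_mul_of_nonneg_left hratio (by positivity)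
            _ = c j := rfl
      have hr1 : Φ.segN 0 n ω ^ t ≤ (∏ j ∈ D, c j ^ t) * Φ.segN 0 n τ ^ t := by
        have h1 := Real.rpow_le_rpow (Φ.segN_pos 0 n ω).le hmc htpos.le
        have hprodnn : (0:ℝ) ≤ ∏ j ∈ D, c j := (Finset.prod_pos (fun j _ => hcpos j)).le
        rwa [Real.mul_rpow hprodnn (Φ.segN_pos 0 n τ).le,
          ← Real.finset_prod_rpow D c (fun j _ => (hcpos j).le) t] at h1
      have hHid : (∏ p : Finset.Ico 0 n, w p (o ω p)) =
          ∏ j ∈ D, ENNReal.ofReal (c j ^ t) := by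
        rw [hDdef, Finset.prod_image (by intro x _ y _ hxy; exact Subtype.ext hxy)]
        rw [← Finset.prod_filter_mul_prod_filter_not Finset.univ
          (fun p : Finset.Ico 0 n => ω p ∉ If (p:ℕ)) (fun p => w p (o ω p))]
        have e1 : ∏ p ∈ Finset.univ.filter (fun p : Finset.Ico 0 n => ω p ∉ If (p:ℕ)),
            w p (o ω p) =
            ∏ p ∈ Finset.univ.filter (fun p : Finset.Ico 0 n => ω p ∉ If (p:ℕ)),
              ENNReal.ofReal (c (p:ℕ) ^ t) := by
          refine Finset.prod_congr rfl (fun p hp => ?_)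
          have hp' := (Finset.mem_filter.mp hp).2
          simp [ho, hw, hp']
        have e2 : ∏ p ∈ Finset.univ.filter (fun p : Finset.Ico 0 n => ¬ ω p ∉ If (p:ℕ)),
            w p (o ω p) = 1 := by
          refine Finset.prod_eq_one (fun p hp => ?_)
          have hp' := not_not.mp (Finset.mem_filter.mp hp).2
          simp [ho, hw, hp']
        rw [e1, e2, mul_one]
      calc ENNReal.ofReal (Φ.segN 0 n ω ^ t)
          ≤ ENNReal.ofReal ((∏ j ∈ D, c j ^ t) * Φ.segN 0 n τ ^ t) :=
            ENNReal.ofReal_le_ofReal hr1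
        _ = ENNReal.ofReal (∏ j ∈ D, c j ^ t) * ENNReal.ofReal (Φ.segN 0 n τ ^ t) :=
            ENNReal.ofReal_mul (Finset.prod_nonneg (fun j _ => Real.rpow_nonneg (hcpos j).le t))
        _ = (∏ j ∈ D, ENNReal.ofReal (c j ^ t)) * ENNReal.ofReal (Φ.segN 0 n τ ^ t) := by
            rw [ENNReal.ofReal_prod_of_nonneg (fun j _ => Real.rpow_nonneg (hcpos j).le t)]
        _ = ENNReal.ofReal (Φ.segN 0 n τ ^ t) * ∏ p : Finset.Ico 0 n, w p (o ω p) := by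
            rw [hHid]; ring
    have hinj : Function.Injective (fun ω : Φ.Word 0 n => (Ψ ω, o ω)) := by
      intro ω ω' h
      have h1 : Ψ ω = Ψ ω' := congrArg Prod.fst h
      have h2 : o ω = o ω' := congrArg Prod.snd h
      funext p
      by_cases hp : ω p ∈ If (p:ℕ) <;> by_cases hp' : ω' p ∈ If (p:ℕ)
      · have := congrFun h1 p
        simpa [hΨ, hp, hp'] using this
      · have := congrFun h2 p
        simp [ho, hp, hp'] at this
      · have := congrFun h2 p
        simp [ho, hp, hp'] at this
      · have := congrFun h2 p
        simpa [ho, hp, hp'] using this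
    have hsum1 : Φ.Z n t ≤
        (∑' τ : (j : Finset.Ico 0 n) → (If (j:ℕ) : Set (Φ.I (j:ℕ))),
          ENNReal.ofReal (Φ.segN 0 n (fun j => ((τ j : Φ.I (j:ℕ)))) ^ t)) *
        (∑' oo : (j : Finset.Ico 0 n) → Option {b : Φ.I (j:ℕ) // b ∉ If (j:ℕ)},
          ∏ p : Finset.Ico 0 n, w p (oo p)) := by
      calc Φ.Z n t
          ≤ ∑' ω : Φ.Word 0 n,
              (ENNReal.ofReal (Φ.segN 0 n (fun j => ((Ψ ω j : Φ.I (j:ℕ)))) ^ t) *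
               ∏ p : Finset.Ico 0 n, w p (o ω p)) := ENNReal.tsum_le_tsum hterm
        _ ≤ ∑' x : ((j : Finset.Ico 0 n) → (If (j:ℕ) : Set (Φ.I (j:ℕ)))) ×
              ((j : Finset.Ico 0 n) → Option {b : Φ.I (j:ℕ) // b ∉ If (j:ℕ)}),
              (ENNReal.ofReal (Φ.segN 0 n (fun j => ((x.1 j : Φ.I (j:ℕ)))) ^ t) *
               ∏ p : Finset.Ico 0 n, w p (x.2 p)) :=
            ENNReal.tsum_comp_le_tsum_of_injective hinj _
        _ = _ := by
            rw [ENNReal.tsum_prod']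
            simp_rw [ENNReal.tsum_mul_left]
            rw [ENNReal.tsum_mul_right]
    have hsum2 : (∑' oo : (j : Finset.Ico 0 n) → Option {b : Φ.I (j:ℕ) // b ∉ If (j:ℕ)},
        ∏ p : Finset.Ico 0 n, w p (oo p)) ≤
        ENNReal.ofReal (∏ j ∈ Finset.range n, (1 + δ j)) := by
      rw [tsum_fintype]
      have hps : (∑ oo : (j : Finset.Ico 0 n) → Option {b : Φ.I (j:ℕ) // b ∉ If (j:ℕ)},
          ∏ p : Finset.Ico 0 n, w p (oo p)) =
          ∏ p : Finset.Ico 0 n, ∑ b : Option {b : Φ.I (p:ℕ) // b ∉ If (p:ℕ)}, w p b := by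
        rw [← Fintype.piFinset_univ, ← Finset.prod_univ_sum]
      rw [hps]
      have hfac : ∀ p : Finset.Ico 0 n,
          (∑ b : Option {b : Φ.I (p:ℕ) // b ∉ If (p:ℕ)}, w p b) ≤
            ENNReal.ofReal (1 + δ (p:ℕ)) := by
        intro p
        rw [Fintype.sum_option]
        have hwnone : w p none = 1 := rfl
        have hsome : (∑ b : {b : Φ.I (p:ℕ) // b ∉ If (p:ℕ)}, w p (some b)) =
            ((Fintype.card {b : Φ.I (p:ℕ) // b ∉ If (p:ℕ)} : ℝ≥0∞)) *
              ENNReal.ofReal (c (p:ℕ) ^ t) := by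
          have : ∀ b : {b : Φ.I (p:ℕ) // b ∉ If (p:ℕ)}, w p (some b) =
              ENNReal.ofReal (c (p:ℕ) ^ t) := fun b => rfl
          rw [Finset.sum_congr rfl (fun b _ => this b), Finset.sum_const, nsmul_eq_mul,
            Finset.card_univ]
        rw [hwnone, hsome]
        have hcardle : (Fintype.card {b : Φ.I (p:ℕ) // b ∉ If (p:ℕ)} : ℝ) ≤
            (Nat.card (Φ.I (p:ℕ)) : ℝ) := by
          have h := Fintype.card_subtype_le (fun b : Φ.I (p:ℕ) => b ∉ If (p:ℕ))
          rw [Nat.card_eq_fintype_card]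
          exact_mod_cast h
        have hreal : (Fintype.card {b : Φ.I (p:ℕ) // b ∉ If (p:ℕ)} : ℝ) * c (p:ℕ) ^ t ≤
            δ (p:ℕ) := by
          have hN1 : (1:ℝ) ≤ (Nat.card (Φ.I (p:ℕ)) : ℝ) := hcard1 _
          have hA1 : (1:ℝ) ≤ α (p:ℕ) := hα1 _
          have hNpos : (0:ℝ) < (Nat.card (Φ.I (p:ℕ)) : ℝ) := lt_of_lt_of_le one_pos hN1
          have hApos : (0:ℝ) < α (p:ℕ) := lt_of_lt_of_le one_pos hA1
          have hgam : γ (p:ℕ) ^ t =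
              α (p:ℕ) ^ t * (Nat.card (Φ.I (p:ℕ)) : ℝ) ^ (1/t₀ * t) := by
            simp only [hγdef]
            rw [Real.mul_rpow hApos.le (Real.rpow_nonneg hNpos.le _),
              ← Real.rpow_mul hNpos.le]
          have hct : c (p:ℕ) ^ t = (Φ.K ^ 2) ^ t *
              ((α (p:ℕ) ^ t)⁻¹ * ((Nat.card (Φ.I (p:ℕ)) : ℝ) ^ (1/t₀ * t))⁻¹) := by
            simp only [hcdef]
            rw [Real.mul_rpow (by positivity) (inv_nonneg.mpr (hγpos _).le),
              Real.inv_rpow (hγpos _).le, hgam, mul_inv]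
          have hs1 : (α (p:ℕ) ^ t)⁻¹ ≤ α (p:ℕ) ^ (-t₀) := by
            rw [← Real.rpow_neg hApos.le]
            exact Real.rpow_le_rpow_of_exponent_le hA1 (by linarith)
          have hexp : (1:ℝ) ≤ 1/t₀ * t := by
            rw [div_mul_eq_mul_div, one_mul, le_div_iff₀ ht₀]
            linarith
          have hNs : (Nat.card (Φ.I (p:ℕ)) : ℝ) ≤
              (Nat.card (Φ.I (p:ℕ)) : ℝ) ^ (1/t₀ * t) := by
            calc (Nat.card (Φ.I (p:ℕ)) : ℝ)
                = (Nat.card (Φ.I (p:ℕ)) : ℝ) ^ (1:ℝ) := (Real.rpow_one _).symm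
              _ ≤ _ := Real.rpow_le_rpow_of_exponent_le hN1 hexp
          have hs2 : (Fintype.card {b : Φ.I (p:ℕ) // b ∉ If (p:ℕ)} : ℝ) *
              ((Nat.card (Φ.I (p:ℕ)) : ℝ) ^ (1/t₀ * t))⁻¹ ≤ 1 := by
            rw [← div_eq_mul_inv, div_le_one (Real.rpow_pos_of_pos hNpos _)]
            exact hcardle.trans hNs
          have hKt : (0:ℝ) ≤ (Φ.K ^ 2) ^ t := Real.rpow_nonneg (by positivity) _
          have hAt : (0:ℝ) ≤ (α (p:ℕ) ^ t)⁻¹ :=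
            inv_nonneg.mpr (Real.rpow_nonneg hApos.le _)
          have hAnt : (0:ℝ) ≤ α (p:ℕ) ^ (-t₀) := Real.rpow_nonneg hApos.le _
          have hCd : (0:ℝ) ≤ (Fintype.card {b : Φ.I (p:ℕ) // b ∉ If (p:ℕ)} : ℝ) *
              ((Nat.card (Φ.I (p:ℕ)) : ℝ) ^ (1/t₀ * t))⁻¹ :=
            mul_nonneg (Nat.cast_nonneg _)
              (inv_nonneg.mpr (Real.rpow_nonneg hNpos.le _))
          simp only [hδdef]
          calc (Fintype.card {b : Φ.I (p:ℕ) // b ∉ If (p:ℕ)} : ℝ) * c (p:ℕ) ^ t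
              = (Φ.K ^ 2) ^ t * (α (p:ℕ) ^ t)⁻¹ *
                ((Fintype.card {b : Φ.I (p:ℕ) // b ∉ If (p:ℕ)} : ℝ) *
                  ((Nat.card (Φ.I (p:ℕ)) : ℝ) ^ (1/t₀ * t))⁻¹) := by rw [hct]; ring
            _ ≤ (Φ.K ^ 2) ^ t * α (p:ℕ) ^ (-t₀) * 1 :=
                mul_le_mul (mul_le_mul_of_nonneg_left hs1 hKt) hs2 hCd
                  (mul_nonneg hKt hAnt)
            _ = (Φ.K ^ 2) ^ t * α (p:ℕ) ^ (-t₀) := mul_one _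
        calc (1:ℝ≥0∞) + (Fintype.card {b : Φ.I (p:ℕ) // b ∉ If (p:ℕ)} : ℝ≥0∞) *
              ENNReal.ofReal (c (p:ℕ) ^ t)
            = ENNReal.ofReal 1 + ENNReal.ofReal
                ((Fintype.card {b : Φ.I (p:ℕ) // b ∉ If (p:ℕ)} : ℝ) * c (p:ℕ) ^ t) := by
              rw [ENNReal.ofReal_one, ← ENNReal.ofReal_natCast, ← ENNReal.ofReal_mul
                (Nat.cast_nonneg _)]
          _ = ENNReal.ofReal (1 + (Fintype.card {b : Φ.I (p:ℕ) // b ∉ If (p:ℕ)} : ℝ) *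
                c (p:ℕ) ^ t) :=
              (ENNReal.ofReal_add (by norm_num)
                (mul_nonneg (Nat.cast_nonneg _) (Real.rpow_nonneg (hcpos _).le _))).symm
          _ ≤ ENNReal.ofReal (1 + δ (p:ℕ)) := ENNReal.ofReal_le_ofReal (by linarith [hreal])
      calc (∏ p : Finset.Ico 0 n,
            ∑ b : Option {b : Φ.I (p:ℕ) // b ∉ If (p:ℕ)}, w p b)
          ≤ ∏ p : Finset.Ico 0 n, ENNReal.ofReal (1 + δ (p:ℕ)) :=
            Finset.prod_le_prod' (fun p _ => hfac p)
        _ = ENNReal.ofReal (∏ p : Finset.Ico 0 n, (1 + δ (p:ℕ))) :=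
            (ENNReal.ofReal_prod_of_nonneg (fun p _ => by linarith [hδnn (p:ℕ)])).symm
        _ = ENNReal.ofReal (∏ j ∈ Finset.range n, (1 + δ j)) := by
            rw [Finset.prod_coe_sort (Finset.Ico 0 n) (fun j => 1 + δ j),
              Finset.range_eq_Ico]
    calc Φ.Z n t
        ≤ (∑' τ : (j : Finset.Ico 0 n) → (If (j:ℕ) : Set (Φ.I (j:ℕ))),
            ENNReal.ofReal (Φ.segN 0 n (fun j => ((τ j : Φ.I (j:ℕ)))) ^ t)) *
          (∑' oo : (j : Finset.Ico 0 n) → Option {b : Φ.I (j:ℕ) // b ∉ If (j:ℕ)},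
            ∏ p : Finset.Ico 0 n, w p (oo p)) := hsum1
      _ ≤ Φ.Zsub If n t * ENNReal.ofReal (∏ j ∈ Finset.range n, (1 + δ j)) :=
          mul_le_mul_right hsum2 _
  -- comparison of the two partition functions and the liminf argument
  have hZsub_le : ∀ n, Φ.Zsub If n t ≤ Φ.Z n t := by
    intro n
    have hinj : Function.Injective
        (fun (τ : (j : Finset.Ico 0 n) → (If (j:ℕ) : Set (Φ.I (j:ℕ)))) =>
          (fun j => ((τ j : Φ.I (j:ℕ))) : Φ.Word 0 n)) := by
      intro τ τ' h
      funext p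
      exact Subtype.ext (congrFun h p)
    exact ENNReal.tsum_comp_le_tsum_of_injective hinj
      (fun ω => ENNReal.ofReal (Φ.segN 0 n ω ^ t))
  have hZsub_pos : ∀ n, 0 < Φ.Zsub If n t := by
    intro n
    set τ0 : (j : Finset.Ico 0 n) → (If (j:ℕ) : Set (Φ.I (j:ℕ))) :=
      fun j => ⟨M (j:ℕ), hMmem (j:ℕ)⟩ with hτ0
    calc (0:ℝ≥0∞) < ENNReal.ofReal (Φ.segN 0 n (fun j => ((τ0 j : Φ.I (j:ℕ)))) ^ t) :=
          ENNReal.ofReal_pos.mpr (Real.rpow_pos_of_pos (Φ.segN_pos _ _ _) t)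
      _ ≤ Φ.Zsub If n t := ENNReal.le_tsum τ0
  have hZ_top : ∀ n, Φ.Z n t < ⊤ := by
    intro n
    have h : Φ.Z n t = ∑ ω : Φ.Word 0 n, ENNReal.ofReal (Φ.segN 0 n ω ^ t) := tsum_fintype _
    rw [h]
    exact ENNReal.sum_lt_top.mpr (fun ω _ => ENNReal.ofReal_lt_top)
  have hZ_pos : ∀ n, 0 < Φ.Z n t := fun n => lt_of_lt_of_le (hZsub_pos n) (hZsub_le n)
  have hZsub_top : ∀ n, Φ.Zsub If n t < ⊤ := fun n => lt_of_le_of_lt (hZsub_le n) (hZ_top n)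
  have hlogZ : ∀ n, ∃ x : ℝ, (Φ.Z n t).log = (x : EReal) := by
    intro n
    exact ⟨(Φ.Z n t).log.toReal, (EReal.coe_toReal
      (ENNReal.log_lt_top_iff.mpr (hZ_top n)).ne
      (ENNReal.bot_lt_log_iff.mpr (hZ_pos n)).ne').symm⟩
  have hlogS : ∀ n, ∃ x : ℝ, (Φ.Zsub If n t).log = (x : EReal) := by
    intro n
    exact ⟨(Φ.Zsub If n t).log.toReal, (EReal.coe_toReal
      (ENNReal.log_lt_top_iff.mpr (hZsub_top n)).ne
      (ENNReal.bot_lt_log_iff.mpr (hZsub_pos n)).ne').symm⟩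
  have dir1 : liminf (fun n : ℕ => (Φ.Zsub If n t).log * (((n:ℝ)⁻¹ : ℝ) : EReal)) atTop ≤
      liminf (fun n : ℕ => (Φ.Z n t).log * (((n:ℝ)⁻¹ : ℝ) : EReal)) atTop := by
    have hptw : ∀ n : ℕ, (Φ.Zsub If n t).log * (((n:ℝ)⁻¹ : ℝ) : EReal) ≤
        (Φ.Z n t).log * (((n:ℝ)⁻¹ : ℝ) : EReal) := by
      intro n
      obtain ⟨x, hx⟩ := hlogS n
      obtain ⟨y, hy⟩ := hlogZ n
      have hxy : x ≤ y := by
        have h := ENNReal.log_le_log_iff.mpr (hZsub_le n)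
        rw [hx, hy] at h
        exact EReal.coe_le_coe_iff.mp h
      rw [hx, hy, ← EReal.coe_mul, ← EReal.coe_mul]
      exact EReal.coe_le_coe_iff.mpr
        (mul_le_mul_of_nonneg_right hxy (inv_nonneg.mpr (Nat.cast_nonneg n)))
    exact Filter.liminf_le_liminf (Eventually.of_forall hptw)
  set e : ℕ → EReal :=
    fun n => (((n:ℝ)⁻¹ * Real.log (∏ j ∈ Finset.range n, (1 + δ j)) : ℝ) : EReal) with hedef
  have hC1 : ∀ n : ℕ, (1:ℝ) ≤ ∏ j ∈ Finset.range n, (1 + δ j) := fun n => by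
    have h := Finset.prod_le_prod (s := Finset.range n) (f := fun _ => (1:ℝ))
      (g := fun j => 1 + δ j) (fun i _ => by norm_num) (fun i _ => by linarith [hδnn i])
    simpa using h
  have hpt : ∀ n : ℕ, (Φ.Z n t).log * (((n:ℝ)⁻¹ : ℝ) : EReal) ≤
      e n + (Φ.Zsub If n t).log * (((n:ℝ)⁻¹ : ℝ) : EReal) := by
    intro n
    obtain ⟨x, hx⟩ := hlogS n
    obtain ⟨y, hy⟩ := hlogZ n
    have hlog : (Φ.Z n t).log ≤ (Φ.Zsub If n t).log +
        ((Real.log (∏ j ∈ Finset.range n, (1 + δ j)) : ℝ) : EReal) := by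
      have h1 : (Φ.Z n t).log ≤
          (Φ.Zsub If n t * ENNReal.ofReal (∏ j ∈ Finset.range n, (1 + δ j))).log :=
        ENNReal.log_le_log_iff.mpr (key n)
      rwa [ENNReal.log_mul_add,
        ENNReal.log_ofReal_of_pos (by linarith [hC1 n])] at h1
    rw [hx, hy, ← EReal.coe_add] at hlog
    have hxy := EReal.coe_le_coe_iff.mp hlog
    simp only [hedef]
    rw [hx, hy, ← EReal.coe_mul, ← EReal.coe_mul, ← EReal.coe_add]
    apply EReal.coe_le_coe_iff.mpr
    have hinv : (0:ℝ) ≤ (n:ℝ)⁻¹ := inv_nonneg.mpr (Nat.cast_nonneg n)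
    nlinarith [mul_nonneg (sub_nonneg.mpr hxy) hinv]
  have he0 : Tendsto (fun n : ℕ => (n:ℝ)⁻¹ * Real.log (∏ j ∈ Finset.range n, (1 + δ j)))
      atTop (𝓝 0) := by
    have hδ0 : Tendsto δ atTop (𝓝 0) := by
      have h1 : Tendsto (fun j : ℕ => (α j) ^ (-t₀)) atTop (𝓝 0) :=
        (tendsto_rpow_neg_atTop ht₀).comp hα
      have h2 := h1.const_mul ((Φ.K ^ 2) ^ t)
      simp only [hδdef]
      simpa using h2
    have h2 : Tendsto (fun j : ℕ => 1 + δ j) atTop (𝓝 (1:ℝ)) := by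
      have h := Filter.Tendsto.add
        (tendsto_const_nhds : Tendsto (fun _ : ℕ => (1:ℝ)) atTop (𝓝 1)) hδ0
      simpa using h
    have hlog0 : Tendsto (fun j : ℕ => Real.log (1 + δ j)) atTop (𝓝 0) := by
      have hc : ContinuousAt Real.log 1 := Real.continuousAt_log one_ne_zero
      have h3 := hc.tendsto.comp h2
      simpa [Real.log_one, Function.comp_def] using h3
    have hces := hlog0.cesaro
    apply hces.congr
    intro n
    congr 1
    rw [Real.log_prod (fun j _ => by have := hδnn j; positivity)]
  have hetend : Tendsto e atTop (𝓝 (0:EReal)) := by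
    have h := (continuous_coe_real_ereal.tendsto (0:ℝ)).comp he0
    simp only [hedef]
    simpa [Function.comp_def] using h
  have hlimsup : limsup e atTop = (0:EReal) := hetend.limsup_eq
  have dir2 : liminf (fun n : ℕ => (Φ.Z n t).log * (((n:ℝ)⁻¹ : ℝ) : EReal)) atTop ≤
      liminf (fun n : ℕ => (Φ.Zsub If n t).log * (((n:ℝ)⁻¹ : ℝ) : EReal)) atTop := by
    calc liminf (fun n : ℕ => (Φ.Z n t).log * (((n:ℝ)⁻¹ : ℝ) : EReal)) atTop
        ≤ liminf (e + fun n : ℕ => (Φ.Zsub If n t).log * (((n:ℝ)⁻¹ : ℝ) : EReal)) atTop :=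
          Filter.liminf_le_liminf (Eventually.of_forall hpt)
      _ ≤ limsup e atTop +
          liminf (fun n : ℕ => (Φ.Zsub If n t).log * (((n:ℝ)⁻¹ : ℝ) : EReal)) atTop :=
          EReal.liminf_add_le (Or.inl (by rw [hlimsup]; simp))
            (Or.inl (by rw [hlimsup]; simp))
      _ = _ := by rw [hlimsup, zero_add]
  have : Φ.lowP t = liminf (fun n : ℕ => (Φ.Z n t).log * (((n:ℝ)⁻¹ : ℝ) : EReal)) atTop := rfl
  rw [this]
  exact le_antisymm dir1 dir2
end
end
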